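/- arXiv:0905.2665 — 3 statements merged into one kernel-verified Lean document; each statement's English description precedes it below -/
import Mathlib

section
/- For an infinite set A, the set A^A of all functions A → A, equipped with the interrogation-based partial application (α,β) ↦ αβ, is a partial combinatory algebra: there exist elements k, s ∈ A^A with kαβ = α always defined, sαβ always defined, and sαβγ ≃ (αγ)(βγ). -/
open Classical

noncomputable section

namespace OostenK2

universe u

/-! ### Finite partial functions -/

/-- Finite partial functions `A ⇀ A`, as finite functional graphs,
ordered by inclusion of graphs. -/
abbrev FPF (A : Type u) : Type u :=
  {p : Set (A × A) // (∀ ⦃a b b'⦄, (a, b) ∈ p → (a, b') ∈ p → b = b') ∧ p.Finite}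

variable {A : Type u}

/-- The domain of a finite partial function. -/
def FPF.dom (p : FPF A) : Set A := Prod.fst '' p.val

/-- The empty finite partial function (the root of sequential trees). -/
def FPF.empty (A : Type u) : FPF A :=
  ⟨∅, fun _ _ _ h => absurd h (Set.notMem_empty _), Set.finite_empty⟩

/-- A total function `α` extends the finite partial function `p`. -/
def agrees (α : A → A) (p : FPF A) : Prop := ∀ ⦃a b⦄, (a, b) ∈ p.val → α a = b

/-- A partial function `β` extends the finite partial function `p`. -/
def agreesP (β : A → Option A) (p : FPF A) : Prop :=
  ∀ ⦃a b⦄, (a, b) ∈ p.val → β a = some b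

/-- Two finite partial functions are compatible if their union is a function. -/
def compatFPF (s t : FPF A) : Prop :=
  ∀ ⦃a b b'⦄, (a, b) ∈ s.val → (a, b') ∈ t.val → b = b'

/-! ### Trees -/

section Trees

variable {X : Type*} [PartialOrder X]

/-- A leaf of `T`: an element of `T` with no strict extension in `T`. -/
def IsLeaf (T : Set X) (p : X) : Prop := p ∈ T ∧ ¬∃ q ∈ T, p < q

/-- `q` is an immediate successor of `p` in `T`. -/
def ImmSucc (T : Set X) (p q : X) : Prop :=
  q ∈ T ∧ p < q ∧ ¬∃ t ∈ T, p < t ∧ t < q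

/-- `T` is a tree with root `root`: the root belongs to `T`, lies below every
element, and the predecessors of any element form a chain. -/
def IsTreeOn (root : X) (T : Set X) : Prop :=
  root ∈ T ∧ (∀ p ∈ T, root ≤ p) ∧ ∀ p ∈ T, IsChain (· ≤ ·) {t | t ∈ T ∧ t ≤ p}

/-- A tree is well-founded iff it has no infinite strictly increasing path. -/
def WellFoundedTree (T : Set X) : Prop :=
  ¬∃ f : ℕ → X, (∀ n, f n ∈ T) ∧ StrictMono f

end Trees

/-- A sequential tree: a tree of finite partial functions, rooted at the empty
function, in which all immediate successors of a non-leaf `p` have domain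
`dom p ∪ {a}` for a single `a ∉ dom p`. -/
def IsSeqTree (T : Set (FPF A)) : Prop :=
  IsTreeOn (FPF.empty A) T ∧
  ∀ p ∈ T, ¬IsLeaf T p →
    ∃ a ∉ FPF.dom p, ∀ q, ImmSucc T p q → FPF.dom q = insert a (FPF.dom p)

/-- A total sequential tree: the immediate successors of a non-leaf `p` are
*all* extensions of `p` with domain `dom p ∪ {a}`. -/
def IsTotalSeqTree (T : Set (FPF A)) : Prop :=
  IsTreeOn (FPF.empty A) T ∧
  ∀ p ∈ T, ¬IsLeaf T p →
    ∃ a ∉ FPF.dom p,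
      ∀ q : FPF A, ImmSucc T p q ↔ p < q ∧ FPF.dom q = insert a (FPF.dom p)

/-- `Φ` (as a relation `(A → A) → A → Prop`) is a partial sequential function:
`Φ α = b` iff the path of `α` through some total sequential tree `T` ends in a
leaf `v` with `F v = b`. -/
def SeqRel (Φ : (A → A) → A → Prop) : Prop :=
  ∃ (T : Set (FPF A)) (F : FPF A → A), IsTotalSeqTree T ∧
    ∀ α b, Φ α b ↔ ∃ v, IsLeaf T v ∧ agrees α v ∧ F v = b

/-- A total bisequential tree: pairs of finite partial functions ordered by
pairwise inclusion; at every non-leaf, either the first or the second component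
is interrogated at a single new argument, with all possible answers present. -/
def IsTotalBiTree (T : Set (FPF A × FPF A)) : Prop :=
  IsTreeOn (FPF.empty A, FPF.empty A) T ∧
  ∀ p ∈ T, ¬IsLeaf T p →
    (∃ a ∉ FPF.dom p.1, ∀ q : FPF A × FPF A,
        ImmSucc T p q ↔ q.2 = p.2 ∧ p.1 ≤ q.1 ∧ FPF.dom q.1 = insert a (FPF.dom p.1)) ∨
    (∃ b ∉ FPF.dom p.2, ∀ q : FPF A × FPF A,
        ImmSucc T p q ↔ q.1 = p.1 ∧ p.2 ≤ q.2 ∧ FPF.dom q.2 = insert b (FPF.dom p.2))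

/-- `G` is a total bisequential function. -/
def BiSeqTotal (G : (A → A) → (A → A) → A) : Prop :=
  ∃ (T : Set (FPF A × FPF A)) (F : FPF A × FPF A → A), IsTotalBiTree T ∧
    ∀ α β, ∃ v, IsLeaf T v ∧ agrees α v.1 ∧ agrees β v.2 ∧ G α β = F v

/-! ### Interrogations (total functions)

Throughout, `mk : List A → A` is an injective coding of finite sequences,
`qp b` is the code `⟨q,b⟩` of a query and `rp c` the code `⟨r,c⟩` of a result. -/

/-- `L` is an interrogation of `β` by `α`. -/
def Interrog (mk : List A → A) (qp : A → A) (α β : A → A) (L : List A) : Prop :=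
  ∀ j (hj : j < L.length), ∃ b, α (mk (L.take j)) = qp b ∧ β b = L[j]'hj

/-- `φ_α(β) = c` via interrogations. -/
def phiRel (mk : List A → A) (qp rp : A → A) (α β : A → A) (c : A) : Prop :=
  ∃ L, Interrog mk qp α β L ∧ α (mk L) = rp c

/-- `L` is an `a`-interrogation of `β` by `α`. -/
def AInterrog (mk : List A → A) (qp : A → A) (a : A) (α β : A → A) (L : List A) : Prop :=
  ∀ j (hj : j < L.length), ∃ b, α (mk (a :: L.take j)) = qp b ∧ β b = L[j]'hj

/-- `φ^a(α,β) = c` via `a`-interrogations. -/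
def phiA (mk : List A → A) (qp rp : A → A) (a : A) (α β : A → A) (c : A) : Prop :=
  ∃ L, AInterrog mk qp a α β L ∧ α (mk (a :: L)) = rp c

/-- The application of `K₂(A)`: `αβ` is defined with value `γ` iff
`φ^a(α,β) = γ a` for every `a`. -/
def AppRel (mk : List A → A) (qp rp : A → A) (α β γ : A → A) : Prop :=
  ∀ a, phiA mk qp rp a α β (γ a)

/-! ### Partial combinatory algebras (abstractly) -/

/-- A set with a partial binary application. -/
structure PCAStruct (X : Type*) where
  app : X → X → Part X

/-- Extension of the application to `Part`; `Part`-equality is Kleene equality. -/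
def pap {X : Type*} (S : PCAStruct X) (u v : Part X) : Part X :=
  u.bind fun a => v.bind fun b => S.app a b

/-- `S` is a partial combinatory algebra: there are `k`, `s` with
`kxy = x` (everywhere defined), `sxy` defined, and `sxyz ≃ (xz)(yz)`. -/
def IsPCA {X : Type*} (S : PCAStruct X) : Prop :=
  ∃ k s : X,
    (∀ x y : X, pap S (S.app k x) (Part.some y) = Part.some x) ∧
    (∀ x y : X, (pap S (S.app s x) (Part.some y)).Dom) ∧
    (∀ x y z : X,
      pap S (pap S (S.app s x) (Part.some y)) (Part.some z)
        = pap S (S.app x z) (S.app y z))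

/-- `t`, `f` are Booleans of `S`: distinct, with a definition-by-cases combinator. -/
def IsBooleans {X : Type*} (S : PCAStruct X) (t f : X) : Prop :=
  t ≠ f ∧ ∃ C : X, ∀ a b : X,
    pap S (pap S (S.app C t) (Part.some a)) (Part.some b) = Part.some a ∧
    pap S (pap S (S.app C f) (Part.some a)) (Part.some b) = Part.some b

/-- Applicative morphism `γ : S → T`: a total relation such that some realizer
`r` tracks application. -/
def IsAppMor {X Y : Type*} (S : PCAStruct X) (T : PCAStruct Y) (γ : X → Set Y) : Prop :=
  (∀ x, (γ x).Nonempty) ∧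
  ∃ r : Y, ∀ x x' z : X, z ∈ S.app x x' → ∀ b ∈ γ x, ∀ b' ∈ γ x',
    ∃ w, w ∈ pap T (T.app r b) (Part.some b') ∧ w ∈ γ z

/-- The preorder on applicative morphisms. -/
def morLE {X Y : Type*} (T : PCAStruct Y) (γ γ' : X → Set Y) : Prop :=
  ∃ s : Y, ∀ x : X, ∀ b ∈ γ x, ∃ c, c ∈ T.app s b ∧ c ∈ γ' x

def morEquiv {X Y : Type*} (T : PCAStruct Y) (γ γ' : X → Set Y) : Prop :=
  morLE T γ γ' ∧ morLE T γ' γ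

/-- Composition of applicative morphisms (as total relations). -/
def morComp {X Y Z : Type*} (γ : X → Set Y) (ε : Y → Set Z) : X → Set Z :=
  fun x => ⋃ y ∈ γ x, ε y

/-- Decidability of a morphism w.r.t. chosen Booleans. -/
def IsDecidableMor {X Y : Type*} (T : PCAStruct Y) (γ : X → Set Y)
    (tX fX : X) (tY fY : Y) : Prop :=
  ∃ d : Y, (∀ b ∈ γ tX, T.app d b = Part.some tY) ∧
    (∀ b ∈ γ fX, T.app d b = Part.some fY)

/-- `rf` represents the partial function `f : X ⇀ X` w.r.t. `γ`. -/
def RepresentsPFun {X Y : Type*} (T : PCAStruct Y) (γ : X → Set Y)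
    (f : X → Option X) (rf : Y) : Prop :=
  ∀ a x, f a = some x → ∀ b ∈ γ a, ∃ c, c ∈ T.app rf b ∧ c ∈ γ x

/-- The pca `K₂(A)` on `A^A` (application via `a`-interrogations). -/
def K2 (mk : List A → A) (qp rp : A → A) : PCAStruct (A → A) where
  app α β := ⟨∀ a, ∃ c, phiA mk qp rp a α β c, fun h a => (h a).choose⟩

/-! ### Interrogations for partial functions -/

/-- Interrogation of a partial `β` by a partial `α`. -/
def PInterrog (mk : List A → A) (qp : A → A) (α β : A → Option A) (L : List A) : Prop :=
  ∀ j (hj : j < L.length), ∃ b, α (mk (L.take j)) = some (qp b) ∧ β b = some (L[j]'hj)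

/-- `φ_α(β) = c` for partial functions. -/
def phiPRel (mk : List A → A) (qp rp : A → A) (α β : A → Option A) (c : A) : Prop :=
  ∃ L, PInterrog mk qp α β L ∧ α (mk L) = some (rp c)

/-- `a`-interrogation of a partial `β` by a partial `α`. -/
def PAInterrog (mk : List A → A) (qp : A → A) (a : A) (α β : A → Option A)
    (L : List A) : Prop :=
  ∀ j (hj : j < L.length), ∃ b, α (mk (a :: L.take j)) = some (qp b) ∧ β b = some (L[j]'hj)

/-- `φ^a(α,β) = c` for partial functions. -/
def phiPA (mk : List A → A) (qp rp : A → A) (a : A) (α β : A → Option A) (c : A) : Prop :=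
  ∃ L, PAInterrog mk qp a α β L ∧ α (mk (a :: L)) = some (rp c)

/-- The (total!) application of `K₂^p(A)` on partial functions. -/
def K2pApp (mk : List A → A) (qp rp : A → A) (α β : A → Option A) : A → Option A :=
  fun a => if h : ∃ c, phiPA mk qp rp a α β c then some h.choose else none

/-- `K₂^p(A)` as a `PCAStruct` (with everywhere-defined application). -/
def K2p (mk : List A → A) (qp rp : A → A) : PCAStruct (A → Option A) :=
  ⟨fun α β => Part.some (K2pApp mk qp rp α β)⟩

/-! ### A pca with standard structure (Booleans, pairing, tuple coding, recursion) -/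

/-- A pca together with the standard derived structure: Booleans with a case
combinator, pairing, an injective standard tuple coding with combinators
manipulating it, and a fixed-point combinator. All of these exist in any
(nontrivial) pca. -/
structure StdPCA (A : Type u) where
  S : PCAStruct A
  isPCA : IsPCA S
  t : A
  f : A
  t_ne_f : t ≠ f
  Cc : A
  C_t : ∀ a b : A, pap S (pap S (S.app Cc t) (Part.some a)) (Part.some b) = Part.some a
  C_f : ∀ a b : A, pap S (pap S (S.app Cc f) (Part.some a)) (Part.some b) = Part.some b
  pairF : A → A → A
  Pc : A
  P0 : A
  P1 : A
  P_spec : ∀ x y : A, pap S (S.app Pc x) (Part.some y) = Part.some (pairF x y)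
  P0_spec : ∀ x y : A, S.app P0 (pairF x y) = Part.some x
  P1_spec : ∀ x y : A, S.app P1 (pairF x y) = Part.some y
  tup : List A → A
  tup_inj : Function.Injective tup
  CONS : A
  CONS_spec : ∀ (x : A) (L : List A),
    pap S (S.app CONS x) (Part.some (tup L)) = Part.some (tup (x :: L))
  SNOC : A
  SNOC_spec : ∀ (L : List A) (y : A),
    pap S (S.app SNOC (tup L)) (Part.some y) = Part.some (tup (L ++ [y]))
  Zc : A
  Z_spec : ∀ g : A, (S.app Zc g).Dom ∧ ∀ zg ∈ S.app Zc g, ∀ x : A,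
    S.app zg x = pap S (S.app g zg) (Part.some x)

/-- The partial function `x ↦ a·x` represented by `a ∈ A`. -/
def abar (P : StdPCA A) (a : A) : A → Option A :=
  fun x => if h : (P.S.app a x).Dom then some ((P.S.app a x).get h) else none

/-- An `x`-interrogation of the oracle `g : A ⇀ A` by `a ∈ A`, inside the pca. -/
def OInterrog (P : StdPCA A) (g : A → Option A) (a x : A) (L : List A) : Prop :=
  ∀ j (hj : j < L.length), ∃ v,
    P.S.app a (P.tup (x :: L.take j)) = Part.some (P.pairF P.f v) ∧ g v = some (L[j]'hj)

/-- The oracle application of `A[g]` : `a ·^g x = c`. -/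
def oapp (P : StdPCA A) (g : A → Option A) (a x c : A) : Prop :=
  ∃ L, OInterrog P g a x L ∧ P.S.app a (P.tup (x :: L)) = Part.some (P.pairF P.t c)

/-- `fn ≤_T g` : `fn` is representable in `A[g]`. -/
def leT (P : StdPCA A) (fn g : A → Option A) : Prop :=
  ∃ a : A, ∀ x y, fn x = some y → oapp P g a x y

/-- `j` is the join `f ⊔ g`. -/
def JoinSpec (P : StdPCA A) (f g j : A → Option A) : Prop :=
  (∀ x, j (P.pairF P.t x) = f x) ∧ (∀ x, j (P.pairF P.f x) = g x) ∧
  (∀ y, (∀ x, y ≠ P.pairF P.t x ∧ y ≠ P.pairF P.f x) → j y = none)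

/-- `K₂(A)` (built from the coding `mk`, `q`, `r`) is compatible with the pca
structure on `A`: elements of `A` translate between the codings and between
`q, r` and `⊥, ⊤`. -/
def CompatCoding (P : StdPCA A) (mk : List A → A) (q r : A) : Prop :=
  (∃ a : A, ∀ L, P.S.app a (mk L) = Part.some (P.tup L)) ∧
  (∃ b : A, ∀ L, P.S.app b (P.tup L) = Part.some (mk L)) ∧
  (∃ c : A, P.S.app c q = Part.some P.f ∧ P.S.app c r = Part.some P.t)

namespace K2Proof

attribute [local instance] Classical.propDecidable

variable (code : List A → A) (q r : A)

/-- decoding -/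
def dec (v : A) : Option (List A) := if h : ∃ L, code L = v then some h.choose else none

theorem dec_code (hcode : Function.Injective code) (L : List A) :
    dec code (code L) = some L := by
  unfold dec
  rw [dif_pos ⟨L, rfl⟩]
  exact congrArg some (hcode (⟨L, rfl⟩ : ∃ L', code L' = code L).choose_spec)

/-- encoding of machine instructions -/
def encT (g : A ⊕ Option A) : A :=
  match g with
  | .inl b => code [q, b]
  | .inr (some c) => code [r, c]
  | .inr none => code []

variable {code q r}

theorem encT_inj (hcode : Function.Injective code) (hqr : q ≠ r) :
    Function.Injective (encT code q r) := by
  rintro (b | (c |_)) (b' | (c' | _)) h <;> simp only [encT] at h <;>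
    first
      | rfl
      | (have h2 := hcode h;
         simp only [List.cons.injEq, reduceCtorEq, and_false, false_and, and_true] at h2 <;>
         simp_all)

theorem encT_eq_q (hcode : Function.Injective code) (hqr : q ≠ r) (g : A ⊕ Option A) (b : A) :
    encT code q r g = code [q, b] ↔ g = .inl b := by
  constructor
  · intro h; exact encT_inj hcode hqr (h.trans rfl : encT code q r g = encT code q r (.inl b))
  · rintro rfl; rfl

theorem encT_eq_r (hcode : Function.Injective code) (hqr : q ≠ r) (g : A ⊕ Option A) (c : A) :
    encT code q r g = code [r, c] ↔ g = .inr (some c) := by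
  constructor
  · intro h; exact encT_inj hcode hqr (h.trans rfl : encT code q r g = encT code q r (.inr (some c)))
  · rintro rfl; rfl

variable (code q r)

def mkMachine (gen : A → List A → A ⊕ Option A) : A → A :=
  fun p =>
    match dec code p with
    | some (a :: L) => encT code q r (gen a L)
    | _ => code []

theorem mkMachine_code (hcode : Function.Injective code) (gen : A → List A → A ⊕ Option A)
    (a : A) (L : List A) :
    mkMachine code q r gen (code (a :: L)) = encT code q r (gen a L) := by
  unfold mkMachine
  rw [dec_code code hcode]

variable {code q r}

theorem phiA_mk_iff (hcode : Function.Injective code) (hqr : q ≠ r)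
    (gen : A → List A → A ⊕ Option A) (a : A) (β : A → A) (c : A) :
    phiA code (fun v => code [q, v]) (fun v => code [r, v]) a (mkMachine code q r gen) β c ↔
      ∃ M : List A, (∀ j (hj : j < M.length),
          ∃ b, gen a (M.take j) = .inl b ∧ β b = M[j]'hj) ∧
        gen a M = .inr (some c) := by
  constructor
  · rintro ⟨M, hI, hres⟩
    refine ⟨M, fun j hj => ?_, ?_⟩
    · obtain ⟨b, hb1, hb2⟩ := hI j hj
      rw [mkMachine_code code q r hcode] at hb1
      exact ⟨b, (encT_eq_q hcode hqr _ _).1 hb1, hb2⟩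
    · rw [mkMachine_code code q r hcode] at hres
      exact (encT_eq_r hcode hqr _ _).1 hres
  · rintro ⟨M, hI, hres⟩
    refine ⟨M, fun j hj => ?_, ?_⟩
    · obtain ⟨b, hb1, hb2⟩ := hI j hj
      exact ⟨b, by rw [mkMachine_code code q r hcode, hb1]; rfl, hb2⟩
    · rw [mkMachine_code code q r hcode, hres]; rfl

/-- functionality of `phiA`. -/
theorem phiA_fun (hcode : Function.Injective code) (hqr : q ≠ r)
    {a : A} {α β : A → A} {c c' : A}
    (h : phiA code (fun v => code [q, v]) (fun v => code [r, v]) a α β c)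
    (h' : phiA code (fun v => code [q, v]) (fun v => code [r, v]) a α β c') : c = c' := by
  obtain ⟨L, hI, hres⟩ := h
  obtain ⟨L', hI', hres'⟩ := h'
  have key : ∀ j, j ≤ L.length → j ≤ L'.length → L.take j = L'.take j := by
    intro j
    induction j with
    | zero => simp
    | succ n ih =>
      intro h1 h2
      have hn1 : n < L.length := h1
      have hn2 : n < L'.length := h2
      have ht : L.take n = L'.take n := ih (le_of_lt hn1) (le_of_lt hn2)
      obtain ⟨b, hb1, hb2⟩ := hI n hn1
      obtain ⟨b', hb1', hb2'⟩ := hI' n hn2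
      rw [ht] at hb1
      have hbb : b = b' := by
        have := hcode (hb1.symm.trans hb1')
        simpa using this
      have hgetel : L[n]'hn1 = L'[n]'hn2 := by rw [← hb2, ← hb2', hbb]
      rw [List.take_succ, List.take_succ, ht, List.getElem?_eq_getElem hn1,
        List.getElem?_eq_getElem hn2, hgetel]
  have hqr' : ∀ (b d : A), code [q, b] ≠ code [r, d] := by
    intro b d h
    have := hcode h
    simp_all
  have hlen : L.length = L'.length := by
    rcases Nat.lt_trichotomy L.length L'.length with hlt | heq | hgt
    · exfalso
      obtain ⟨b, hb1, _⟩ := hI' L.length hlt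
      rw [← key L.length le_rfl (le_of_lt hlt), List.take_length] at hb1
      exact hqr' b c (hb1.symm.trans hres)
    · exact heq
    · exfalso
      obtain ⟨b, hb1, _⟩ := hI L'.length hgt
      rw [key L'.length (le_of_lt hgt) le_rfl, List.take_length] at hb1
      exact hqr' b c' (hb1.symm.trans hres')
  have hLL : L = L' := by
    have := key L.length le_rfl (le_of_le_of_eq le_rfl hlen)
    rwa [List.take_length, hlen, List.take_length] at this
  subst hLL
  have := hcode (hres.symm.trans hres')
  simpa using this

theorem mem_app_iff (hcode : Function.Injective code) (hqr : q ≠ r)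
    (α β γ : A → A) :
    γ ∈ (K2 code (fun v => code [q, v]) (fun v => code [r, v])).app α β ↔
      ∀ a, phiA code (fun v => code [q, v]) (fun v => code [r, v]) a α β (γ a) := by
  constructor
  · rintro ⟨h, hget⟩ a
    have : (h a).choose = γ a := congrFun hget a
    exact this ▸ (h a).choose_spec
  · intro h
    refine ⟨fun a => ⟨γ a, h a⟩, funext fun a => ?_⟩
    exact phiA_fun hcode hqr (Exists.choose_spec ⟨γ a, h a⟩) (h a)

theorem app_eq_some (hcode : Function.Injective code) (hqr : q ≠ r)
    (α β γ : A → A)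
    (h : ∀ a, phiA code (fun v => code [q, v]) (fun v => code [r, v]) a α β (γ a)) :
    (K2 code (fun v => code [q, v]) (fun v => code [r, v])).app α β = Part.some γ :=
  Part.eq_some_iff.2 ((mem_app_iff hcode hqr α β γ).2 h)

/-! ### The simulation machine -/

inductive Cont (A : Type u) : Type u
  | c1 (a : A) | c2 (a : A) | c3x (a : A) (T : List A) | c3y (a : A) (T : List A)

inductive St (A : Type u) : Type u
  | inner (m : Bool) (w : A) (as : List A) (k : Cont A)
  | halt (c : A) | dead | need (m : Bool) (p : A)

inductive Out (A : Type u) : Type u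
  | ask (b : A) | res (o : Option A) | need (m : Bool) (p : A)

def look (xo yo : A → Option A) : Bool → A → Option A
  | true, p => xo p
  | false, p => yo p

variable (code q r)

def classify (v : A) : Option (Bool × A) :=
  if h : ∃ b, v = code [q, b] then some (true, h.choose)
  else if h : ∃ d, v = code [r, d] then some (false, h.choose)
  else none

variable {code q r}

theorem classify_q (hcode : Function.Injective code) (b : A) :
    classify code q r (code [q, b]) = some (true, b) := by
  have h : ∃ b', code [q, b] = code [q, b'] := ⟨b, rfl⟩
  unfold classify
  rw [dif_pos h]
  have h2 := hcode h.choose_spec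
  injection h2 with _ h3
  injection h3 with h4 _
  rw [← h4]

theorem classify_r (hcode : Function.Injective code) (hqr : q ≠ r) (c : A) :
    classify code q r (code [r, c]) = some (false, c) := by
  have hneg : ¬∃ b', code [r, c] = code [q, b'] := by
    rintro ⟨b', hb⟩
    have h2 := hcode hb
    injection h2 with h3 _
    exact hqr h3.symm
  have h : ∃ d', code [r, c] = code [r, d'] := ⟨c, rfl⟩
  unfold classify
  rw [dif_neg hneg, dif_pos h]
  have h2 := hcode h.choose_spec
  injection h2 with _ h3
  injection h3 with h4 _
  rw [← h4]

theorem classify_nil (hcode : Function.Injective code) :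
    classify code q r (code []) = none := by
  have hneg : ¬∃ b', (code [] : A) = code [q, b'] := by
    rintro ⟨b', hb⟩; have h2 := hcode hb; cases h2
  have hneg' : ¬∃ d', (code [] : A) = code [r, d'] := by
    rintro ⟨d', hd⟩; have h2 := hcode hd; cases h2
  unfold classify
  rw [dif_neg hneg, dif_neg hneg']

theorem classify_encT (hcode : Function.Injective code) (hqr : q ≠ r) (g : A ⊕ Option A) :
    classify code q r (encT code q r g) =
      match g with
      | .inl b => some (true, b)
      | .inr (some c) => some (false, c)
      | .inr none => none := by
  rcases g with b | (_ | c)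
  · exact classify_q hcode b
  · exact classify_nil hcode
  · exact classify_r hcode hqr c

variable (code q r)

def applyK (k : Cont A) (c : A) : St A :=
  match k with
  | .c1 a => .inner false a [] (.c2 a)
  | .c2 a => .inner true (code [a]) [] (.c3x a [])
  | .c3x a T =>
    match classify code q r c with
    | some (true, b) => .inner false b [] (.c3y a T)
    | some (false, c') => .halt c'
    | none => .dead
  | .c3y a T => .inner true (code (a :: (T ++ [c]))) [] (.c3x a (T ++ [c]))

def step (xo yo : A → Option A) : St A → A → St A
  | .inner m w as k, v =>
    match look xo yo m (code (w :: as)) with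
    | none => .need m (code (w :: as))
    | some val =>
      match classify code q r val with
      | some (true, _) => .inner m w (as ++ [v]) k
      | some (false, c) => applyK code q r k c
      | none => .dead
  | .need m p, _ => .need m p
  | _, _ => .dead

def outOf (xo yo : A → Option A) : St A → Out A
  | .inner m w as _ =>
    match look xo yo m (code (w :: as)) with
    | none => .need m (code (w :: as))
    | some val =>
      match classify code q r val with
      | some (true, b) => .ask b
      | some (false, _) => .ask (code [])
      | none => .res none
  | .halt c => .res (some c)
  | .dead => .res none
  | .need m p => .need m p

def runS (xo yo : A → Option A) (s : St A) (L : List A) : St A :=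
  List.foldl (step code q r xo yo) s L

def out (xo yo : A → Option A) (s : St A) (L : List A) : Out A :=
  outOf code q r xo yo (runS code q r xo yo s L)

def init (a : A) : St A := .inner true a [] (.c1 a)

variable {code q r}

def tot (f : A → A) : A → Option A := fun p => some (f p)

def update (o : A → Option A) (pt v : A) : A → Option A :=
  fun p => if p = pt then some v else o p

def osub (o o' : A → Option A) : Prop := ∀ p v, o p = some v → o' p = some v

theorem osub_refl (o : A → Option A) : osub o o := fun _ _ h => h

theorem osub_update (o : A → Option A) {pt : A} (h : o pt = none) (v : A) :
    osub o (update o pt v) := by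
  intro p w hw
  unfold update
  by_cases hp : p = pt
  · subst hp; rw [hw] at h; cases h
  · rw [if_neg hp]; exact hw

theorem osub_update_tot {f : A → A} {o : A → Option A} (h : osub o (tot f)) (pt : A) :
    osub (update o pt (f pt)) (tot f) := by
  intro p w hw
  unfold update at hw
  by_cases hp : p = pt
  · subst hp; rw [if_pos rfl] at hw; cases hw; rfl
  · rw [if_neg hp] at hw; exact h p w hw

theorem update_self (o : A → Option A) (pt v : A) : update o pt v pt = some v := by
  unfold update; rw [if_pos rfl]

/-! ### absorbing states -/

theorem step_need (xo yo : A → Option A) (m : Bool) (p : A) (v : A) :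
    step code q r xo yo (.need m p) v = .need m p := rfl

theorem runS_need (xo yo : A → Option A) (m : Bool) (p : A) (L : List A) :
    runS code q r xo yo (.need m p) L = .need m p := by
  induction L with
  | nil => rfl
  | cons v L ih => exact ih

theorem runS_dead (xo yo : A → Option A) (L : List A) :
    runS code q r xo yo .dead L = .dead := by
  induction L with
  | nil => rfl
  | cons v L ih => exact ih

theorem out_dead (xo yo : A → Option A) (L : List A) :
    out code q r xo yo .dead L = .res none := by
  unfold out; rw [runS_dead]; rfl

theorem out_need (xo yo : A → Option A) (m : Bool) (p : A) (L : List A) :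
    out code q r xo yo (.need m p) L = .need m p := by
  unfold out; rw [runS_need]; rfl

theorem runS_cons (xo yo : A → Option A) (s : St A) (v : A) (L : List A) :
    runS code q r xo yo s (v :: L) = runS code q r xo yo (step code q r xo yo s v) L := rfl

theorem out_cons (xo yo : A → Option A) (s : St A) (v : A) (L : List A) :
    out code q r xo yo s (v :: L) = out code q r xo yo (step code q r xo yo s v) L := rfl

theorem out_nil (xo yo : A → Option A) (s : St A) :
    out code q r xo yo s [] = outOf code q r xo yo s := rfl

theorem applyK_ne_need (k : Cont A) (c : A) (m : Bool) (p : A) :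
    applyK code q r k c ≠ .need m p := by
  rcases k with a | a | ⟨a, T⟩ | ⟨a, T⟩ <;> unfold applyK
  · simp
  · simp
  · rcases h : classify code q r c with _ | ⟨_ | _, b⟩ <;> simp
  · simp

theorem step_some_ne_need {xo yo : A → Option A} {m : Bool} {w : A} {as : List A} {k : Cont A}
    {val : A} (hl : look xo yo m (code (w :: as)) = some val) (v : A) (m' : Bool) (p : A) :
    step code q r xo yo (.inner m w as k) v ≠ .need m' p := by
  simp only [step, hl]
  rcases h : classify code q r val with _ | ⟨_ | _, b⟩ <;> simp
  exact applyK_ne_need k b m' p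

/-! ### survival measure and oracle-extension lemmas -/

variable (code q r)

def surv (xo yo : A → Option A) : St A → List A → ℕ
  | .need _ _, _ => 0
  | .inner m w as _, [] =>
    (match look xo yo m (code (w :: as)) with
     | none => 0 | some _ => 1)
  | _, [] => 1
  | .inner m w as k, v :: L =>
    (match look xo yo m (code (w :: as)) with
     | none => 0
     | some _ => 1 + surv xo yo (step code q r xo yo (.inner m w as k) v) L)
  | s, v :: L => 1 + surv xo yo (step code q r xo yo s v) L

variable {code q r}

theorem surv_le (xo yo : A → Option A) : ∀ (L : List A) (s : St A),
    surv code q r xo yo s L ≤ L.length + 1 := by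
  intro L
  induction L with
  | nil =>
    intro s
    rcases s with ⟨m, w, as, k⟩ | c | _ | ⟨m, p⟩ <;> simp only [surv]
    · rcases look xo yo m (code (w :: as)) with _ | val <;> simp
    · simp
    · simp
    · simp
  | cons v L ih =>
    intro s
    rcases s with ⟨m, w, as, k⟩ | c | _ | ⟨m, p⟩ <;> simp only [surv, List.length_cons]
    · rcases look xo yo m (code (w :: as)) with _ | val
      · simp
      · simp only []
        have := ih (step code q r xo yo (.inner m w as k) v)
        omega
    · have := ih (step code q r xo yo (.halt c) v); omega
    · have := ih (step code q r xo yo .dead v); omega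
    · simp

theorem out_need_none {xo yo : A → Option A} {m₀ : Bool} {pt : A} :
    ∀ (L : List A) (s : St A), (∀ p', s ≠ .need m₀ p') →
      out code q r xo yo s L = .need m₀ pt → look xo yo m₀ pt = none := by
  intro L
  induction L with
  | nil =>
    intro s hs h
    rcases s with ⟨m, w, as, k⟩ | c | _ | ⟨m, p⟩
    · rcases hl : look xo yo m (code (w :: as)) with _ | val
      · have : out code q r xo yo (.inner m w as k) [] = .need m (code (w :: as)) := by
          simp only [out, runS, List.foldl_nil, outOf, hl]
        rw [this] at h
        injection h with h1 h2
        subst h1; subst h2; exact hl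
      · exfalso
        rw [out_nil] at h
        simp only [outOf, hl] at h
        rcases hcl : classify code q r val with _ | ⟨_ | _, b⟩ <;> rw [hcl] at h <;> simp at h
    · simp [out, runS, outOf] at h
    · simp [out, runS, outOf] at h
    · rw [out_need] at h
      injection h with h1 h2
      exact absurd (h1 ▸ rfl) (hs p)
  | cons v L ih =>
    intro s hs h
    rcases s with ⟨m, w, as, k⟩ | c | _ | ⟨m, p⟩
    · rcases hl : look xo yo m (code (w :: as)) with _ | val
      · have hst : step code q r xo yo (.inner m w as k) v = .need m (code (w :: as)) := by
          simp only [step, hl]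
        rw [out_cons, hst, out_need] at h
        injection h with h1 h2
        subst h1; subst h2; exact hl
      · rw [out_cons] at h
        exact ih _ (fun p' => step_some_ne_need hl v m₀ p') h
    · rw [out_cons] at h
      have : step code q r xo yo (.halt c) v = .dead := rfl
      rw [this, out_dead] at h; cases h
    · rw [out_cons] at h
      have : step code q r xo yo .dead v = .dead := rfl
      rw [this, out_dead] at h; cases h
    · rw [out_need] at h
      injection h with h1 h2
      exact absurd (h1 ▸ rfl) (hs p)

theorem ext_need {xo yo xo' yo' : A → Option A} {m₀ : Bool} {pt : A}
    (hnone : ∀ p, look xo yo m₀ p = none → look xo' yo' m₀ p = none)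
    (hkeep : ∀ m p val, look xo yo m p = some val → look xo' yo' m p = some val) :
    ∀ (L : List A) (s : St A),
      out code q r xo yo s L = .need m₀ pt → out code q r xo' yo' s L = .need m₀ pt := by
  intro L
  induction L with
  | nil =>
    intro s h
    rcases s with ⟨m, w, as, k⟩ | c | _ | ⟨m, p⟩
    · rcases hl : look xo yo m (code (w :: as)) with _ | val
      · have : out code q r xo yo (.inner m w as k) [] = .need m (code (w :: as)) := by
          simp only [out, runS, List.foldl_nil, outOf, hl]
        rw [this] at h
        injection h with h1 h2
        subst h1; subst h2
        simp only [out, runS, List.foldl_nil, outOf, hnone _ hl]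
      · exfalso
        rw [out_nil] at h
        simp only [outOf, hl] at h
        rcases hcl : classify code q r val with _ | ⟨_ | _, b⟩ <;> rw [hcl] at h <;> simp at h
    · simp [out, runS, outOf] at h
    · simp [out, runS, outOf] at h
    · rw [out_need] at h
      rw [out_need]; exact h
  | cons v L ih =>
    intro s h
    rcases s with ⟨m, w, as, k⟩ | c | _ | ⟨m, p⟩
    · rcases hl : look xo yo m (code (w :: as)) with _ | val
      · have hst : step code q r xo yo (.inner m w as k) v = .need m (code (w :: as)) := by
          simp only [step, hl]
        rw [out_cons, hst, out_need] at h
        injection h with h1 h2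
        subst h1; subst h2
        have hst' : step code q r xo' yo' (.inner m w as k) v = .need m (code (w :: as)) := by
          simp only [step, hnone _ hl]
        rw [out_cons, hst', out_need]
      · have hst : step code q r xo' yo' (.inner m w as k) v
            = step code q r xo yo (.inner m w as k) v := by
          simp only [step, hl, hkeep _ _ _ hl]
        rw [out_cons] at h
        rw [out_cons, hst]
        exact ih _ h
    · rw [out_cons] at h
      have hd : step code q r xo yo (.halt c) v = .dead := rfl
      rw [hd, out_dead] at h; cases h
    · rw [out_cons] at h
      have hd : step code q r xo yo .dead v = .dead := rfl
      rw [hd, out_dead] at h; cases h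
    · rw [out_need] at h
      rw [out_need]; exact h

theorem ext_stable {xo yo xo' yo' : A → Option A}
    (hkeep : ∀ m p val, look xo yo m p = some val → look xo' yo' m p = some val) :
    ∀ (L : List A) (s : St A), (∀ m p, out code q r xo yo s L ≠ .need m p) →
      out code q r xo' yo' s L = out code q r xo yo s L := by
  intro L
  induction L with
  | nil =>
    intro s h
    rcases s with ⟨m, w, as, k⟩ | c | _ | ⟨m, p⟩
    · rcases hl : look xo yo m (code (w :: as)) with _ | val
      · exfalso
        exact h m (code (w :: as)) (by simp only [out, runS, List.foldl_nil, outOf, hl])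
      · have h1 : out code q r xo' yo' (.inner m w as k) []
            = outOf code q r xo' yo' (.inner m w as k) := rfl
        have h2 : out code q r xo yo (.inner m w as k) []
            = outOf code q r xo yo (.inner m w as k) := rfl
        rw [h1, h2]
        simp only [outOf, hl, hkeep _ _ _ hl]
    · rfl
    · rfl
    · exact absurd (out_need xo yo m p []) (by intro hh; exact h m p hh)
  | cons v L ih =>
    intro s h
    rcases s with ⟨m, w, as, k⟩ | c | _ | ⟨m, p⟩
    · rcases hl : look xo yo m (code (w :: as)) with _ | val
      · exfalso
        have hst : step code q r xo yo (.inner m w as k) v = .need m (code (w :: as)) := by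
          simp only [step, hl]
        exact h m (code (w :: as)) (by rw [out_cons, hst, out_need])
      · have hst : step code q r xo' yo' (.inner m w as k) v
            = step code q r xo yo (.inner m w as k) v := by
          simp only [step, hl, hkeep _ _ _ hl]
        rw [out_cons, hst, out_cons] at *
        exact ih _ (fun m' p' => h m' p')
    · rw [out_cons, out_cons]
      have hd : step code q r xo yo (.halt c) v = .dead := rfl
      have hd' : step code q r xo' yo' (.halt c) v = .dead := rfl
      rw [hd, hd', out_dead, out_dead]
    · rw [out_cons, out_cons]
      have hd : step code q r xo yo .dead v = .dead := rfl
      have hd' : step code q r xo' yo' .dead v = .dead := rfl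
      rw [hd, hd', out_dead, out_dead]
    · rw [out_need, out_need]

theorem surv_progress {xo yo xo' yo' : A → Option A} {m₀ : Bool} {pt : A}
    (hkeep : ∀ m p val, look xo yo m p = some val → look xo' yo' m p = some val)
    (hnew : ∃ v₀, look xo' yo' m₀ pt = some v₀) :
    ∀ (L : List A) (s : St A), (∀ m' p', s ≠ .need m' p') →
      out code q r xo yo s L = .need m₀ pt →
      surv code q r xo yo s L < surv code q r xo' yo' s L := by
  intro L
  induction L with
  | nil =>
    intro s hs h
    rcases s with ⟨m, w, as, k⟩ | c | _ | ⟨m, p⟩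
    · rcases hl : look xo yo m (code (w :: as)) with _ | val
      · have : out code q r xo yo (.inner m w as k) [] = .need m (code (w :: as)) := by
          simp only [out, runS, List.foldl_nil, outOf, hl]
        rw [this] at h
        injection h with h1 h2
        subst h1; subst h2
        obtain ⟨v₀, hv₀⟩ := hnew
        simp only [surv, hl, hv₀]
        omega
      · exfalso
        rw [out_nil] at h
        simp only [outOf, hl] at h
        rcases hcl : classify code q r val with _ | ⟨_ | _, b⟩ <;> rw [hcl] at h <;> simp at h
    · simp [out, runS, outOf] at h
    · simp [out, runS, outOf] at h
    · exact absurd rfl (hs m p)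
  | cons v L ih =>
    intro s hs h
    rcases s with ⟨m, w, as, k⟩ | c | _ | ⟨m, p⟩
    · rcases hl : look xo yo m (code (w :: as)) with _ | val
      · have hst : step code q r xo yo (.inner m w as k) v = .need m (code (w :: as)) := by
          simp only [step, hl]
        rw [out_cons, hst, out_need] at h
        injection h with h1 h2
        subst h1; subst h2
        obtain ⟨v₀, hv₀⟩ := hnew
        simp only [surv, hl, hv₀]
        omega
      · have hst : step code q r xo' yo' (.inner m w as k) v
            = step code q r xo yo (.inner m w as k) v := by
          simp only [step, hl, hkeep _ _ _ hl]
        rw [out_cons] at h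
        have := ih (step code q r xo yo (.inner m w as k) v)
          (fun m' p' => step_some_ne_need hl v m' p') h
        simp only [surv, hl, hkeep _ _ _ hl, hst]
        omega
    · rw [out_cons] at h
      have hd : step code q r xo yo (.halt c) v = .dead := rfl
      rw [hd, out_dead] at h; cases h
    · rw [out_cons] at h
      have hd : step code q r xo yo .dead v = .dead := rfl
      rw [hd, out_dead] at h; cases h
    · exact absurd rfl (hs m p)

theorem look_update_y {xo yo : A → Option A} {pt : A} (h : yo pt = none) (v : A) :
    ∀ m p val, look xo yo m p = some val → look xo (update yo pt v) m p = some val := by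
  rintro (_ | _) p val hv
  · simp only [look, update] at *
    by_cases hp : p = pt
    · subst hp; rw [hv] at h; cases h
    · rw [if_neg hp]; exact hv
  · exact hv

theorem look_update_x {xo yo : A → Option A} {pt : A} (h : xo pt = none) (v : A) :
    ∀ m p val, look xo yo m p = some val → look (update xo pt v) yo m p = some val := by
  rintro (_ | _) p val hv
  · exact hv
  · simp only [look, update] at *
    by_cases hp : p = pt
    · subst hp; rw [hv] at h; cases h
    · rw [if_neg hp]; exact hv

theorem out_no_need_total {xo yo : A → Option A} {m₀ : Bool}
    (htot : ∀ p, look xo yo m₀ p ≠ none) (L : List A) (s : St A)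
    (hs : ∀ p', s ≠ .need m₀ p') (pt : A) :
    out code q r xo yo s L ≠ .need m₀ pt := by
  intro h
  exact htot pt (out_need_none L s hs h)

/-! ### the `S`-value machine `Sig` and its semantics -/

variable (code q r)

def o2g : Out A → A ⊕ Option A
  | .ask b => .inl b
  | .res o => .inr o
  | .need _ _ => .inr none

def sigGen (x y : A → A) (a : A) (L : List A) : A ⊕ Option A :=
  o2g (out code q r (tot x) (tot y) (init a) L)

def Sig (x y : A → A) : A → A := mkMachine code q r (sigGen code q r x y)

variable {code q r}

def mfun (x y : A → A) : Bool → A → A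
  | true, p => x p
  | false, p => y p

theorem look_tot (x y : A → A) (m : Bool) (p : A) :
    look (tot x) (tot y) m p = some (mfun x y m p) := by cases m <;> rfl

theorem outOf_inner_q (hcode : Function.Injective code) (x y : A → A)
    {m : Bool} {w : A} {as : List A} (k : Cont A) {b : A}
    (hb : mfun x y m (code (w :: as)) = code [q, b]) :
    outOf code q r (tot x) (tot y) (.inner m w as k) = .ask b := by
  simp only [outOf, look_tot, hb, classify_q hcode]

theorem outOf_inner_r (hcode : Function.Injective code) (hqr : q ≠ r) (x y : A → A)
    {m : Bool} {w : A} {as : List A} (k : Cont A) {d : A}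
    (hb : mfun x y m (code (w :: as)) = code [r, d]) :
    outOf code q r (tot x) (tot y) (.inner m w as k) = .ask (code []) := by
  simp only [outOf, look_tot, hb, classify_r hcode hqr]

theorem step_inner_q (hcode : Function.Injective code) (x y : A → A)
    {m : Bool} {w : A} {as : List A} (k : Cont A) {b : A}
    (hb : mfun x y m (code (w :: as)) = code [q, b]) (v : A) :
    step code q r (tot x) (tot y) (.inner m w as k) v = .inner m w (as ++ [v]) k := by
  simp only [step, look_tot, hb, classify_q hcode]

theorem step_inner_r (hcode : Function.Injective code) (hqr : q ≠ r) (x y : A → A)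
    {m : Bool} {w : A} {as : List A} (k : Cont A) {d : A}
    (hb : mfun x y m (code (w :: as)) = code [r, d]) (v : A) :
    step code q r (tot x) (tot y) (.inner m w as k) v = applyK code q r k d := by
  simp only [step, look_tot, hb, classify_r hcode hqr]

/-- traces: a run together with `z`-consistent emissions. -/
def Trace (x y z : A → A) (s : St A) (L : List A) (s' : St A) : Prop :=
  runS code q r (tot x) (tot y) s L = s' ∧
  ∀ j (hj : j < L.length), ∃ b,
    out code q r (tot x) (tot y) s (L.take j) = .ask b ∧ z b = L[j]'hj

theorem trace_refl (x y z : A → A) (s : St A) : Trace (code := code) (q := q) (r := r) x y z s [] s :=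
  ⟨rfl, fun j hj => absurd hj (by simp)⟩

theorem runS_append (xo yo : A → Option A) (s : St A) (L1 L2 : List A) :
    runS code q r xo yo s (L1 ++ L2) = runS code q r xo yo (runS code q r xo yo s L1) L2 :=
  List.foldl_append

theorem trace_append {x y z : A → A} {s s' s'' : St A} {L1 L2 : List A}
    (h1 : Trace (code := code) (q := q) (r := r) x y z s L1 s')
    (h2 : Trace (code := code) (q := q) (r := r) x y z s' L2 s'') :
    Trace (code := code) (q := q) (r := r) x y z s (L1 ++ L2) s'' := by
  obtain ⟨hr1, he1⟩ := h1
  obtain ⟨hr2, he2⟩ := h2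
  constructor
  · rw [runS_append, hr1, hr2]
  · intro j hj
    rcases lt_or_ge j L1.length with hlt | hge
    · obtain ⟨b, hb1, hb2⟩ := he1 j hlt
      refine ⟨b, ?_, ?_⟩
      · rwa [List.take_append_of_le_length (le_of_lt hlt)]
      · rwa [List.getElem_append_left hlt]
    · obtain ⟨n, rfl⟩ : ∃ n, j = L1.length + n := ⟨j - L1.length, by omega⟩
      have hn : n < L2.length := by
        simp only [List.length_append] at hj; omega
      obtain ⟨b, hb1, hb2⟩ := he2 n hn
      refine ⟨b, ?_, ?_⟩
      · rw [List.take_length_add_append, out, runS_append, hr1]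
        exact hb1
      · rw [List.getElem_append_right (by omega)]
        simpa using hb2
  
theorem run_prefix (hcode : Function.Injective code) (x y : A → A) (m : Bool) (w : A)
    (k : Cont A) (Lw : List A)
    (hI : ∀ j (hj : j < Lw.length), ∃ b,
      mfun x y m (code (w :: Lw.take j)) = code [q, b]) :
    ∀ n, n ≤ Lw.length →
      runS code q r (tot x) (tot y) (.inner m w [] k) (Lw.take n) = .inner m w (Lw.take n) k := by
  intro n
  induction n with
  | zero => intro _; simp [runS]
  | succ n ih =>
    intro hn
    have hn' : n < Lw.length := hn
    obtain ⟨b, hb⟩ := hI n hn'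
    have hts : Lw.take (n+1) = Lw.take n ++ [Lw[n]'hn'] := by
      rw [List.take_succ, List.getElem?_eq_getElem hn']; rfl
    rw [hts, runS_append, ih (le_of_lt hn')]
    show step code q r (tot x) (tot y) (.inner m w (Lw.take n) k) (Lw[n]'hn')
        = .inner m w (Lw.take n ++ [Lw[n]'hn']) k
    exact step_inner_q hcode x y k hb _

theorem trace_seg (hcode : Function.Injective code) (hqr : q ≠ r) (x y z : A → A)
    (m : Bool) (w : A) (k : Cont A) (Lw : List A) (d : A)
    (hI : ∀ j (hj : j < Lw.length), ∃ b,
      mfun x y m (code (w :: Lw.take j)) = code [q, b] ∧ z b = Lw[j]'hj)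
    (hres : mfun x y m (code (w :: Lw)) = code [r, d]) :
    Trace (code := code) (q := q) (r := r) x y z (.inner m w [] k)
      (Lw ++ [z (code [])]) (applyK code q r k d) := by
  have hpre := run_prefix (q := q) (r := r) hcode x y m w k Lw
    (fun j hj => (hI j hj).imp fun b hb => hb.1)
  have hfull : runS code q r (tot x) (tot y) (.inner m w [] k) Lw = .inner m w Lw k := by
    have := hpre Lw.length le_rfl
    rwa [List.take_length] at this
  constructor
  · rw [runS_append, hfull]
    show step code q r (tot x) (tot y) (.inner m w Lw k) (z (code [])) = applyK code q r k d
    exact step_inner_r hcode hqr x y k hres _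
  · intro j hj
    rcases lt_or_ge j Lw.length with hlt | hge
    · obtain ⟨b, hb1, hb2⟩ := hI j hlt
      refine ⟨b, ?_, ?_⟩
      · rw [List.take_append_of_le_length (le_of_lt hlt), out, hpre j (le_of_lt hlt)]
        exact outOf_inner_q hcode x y k hb1
      · rwa [List.getElem_append_left hlt]
    · have hj' : j = Lw.length := by
        simp only [List.length_append, List.length_cons, List.length_nil] at hj; omega
      subst hj'
      refine ⟨code [], ?_, ?_⟩
      · rw [show Lw ++ [z (code [])] = Lw ++ [z (code [])] from rfl,
          List.take_append_of_le_length le_rfl, List.take_length, out, hfull]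
        exact outOf_inner_r hcode hqr x y k hres
      · rw [List.getElem_append_right (le_refl Lw.length)]
        simp

theorem dec_some {v : A} {l : List A} (h : dec code v = some l) : code l = v := by
  unfold dec at h
  split at h
  · injection h with h'
    exact h' ▸ Exists.choose_spec ‹∃ L, code L = v›
  · cases h

theorem classify_inv_q {val b : A} (h : classify code q r val = some (true, b)) :
    val = code [q, b] := by
  unfold classify at h
  split at h
  · next h1 =>
    simp only [Option.some.injEq, Prod.mk.injEq, true_and] at h
    rw [← h]
    exact h1.choose_spec
  · split at h
    · simp at h
    · cases h

theorem classify_inv_r {val d : A} (h : classify code q r val = some (false, d)) :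
    val = code [r, d] := by
  unfold classify at h
  split at h
  · simp at h
  · split at h
    · next h1 =>
      simp only [Option.some.injEq, Prod.mk.injEq, true_and] at h
      rw [← h]
      exact h1.choose_spec
    · cases h

/-- ⇐ : a composite computation `(x·z)(y·z)(a) = c` gives a `Sig`-interrogation. -/
theorem sig_complete (hcode : Function.Injective code) (hqr : q ≠ r) (x y z u v : A → A)
    (hu : ∀ w, phiA code (fun t => code [q, t]) (fun t => code [r, t]) w x z (u w))
    (hv : ∀ w, phiA code (fun t => code [q, t]) (fun t => code [r, t]) w y z (v w))
    {a c : A}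
    (htop : phiA code (fun t => code [q, t]) (fun t => code [r, t]) a u v c) :
    phiA code (fun t => code [q, t]) (fun t => code [r, t]) a (Sig code q r x y) z c := by
  have hseg : ∀ (m : Bool) (w : A) (k : Cont A), ∃ LL,
      Trace (code := code) (q := q) (r := r) x y z (.inner m w [] k) LL
        (applyK code q r k (mfun u v m w)) := by
    intro m w k
    cases m
    · obtain ⟨Lw, hI, hres⟩ := hv w
      exact ⟨_, trace_seg hcode hqr x y z false w k Lw (v w)
        (fun j hj => hI j hj) hres⟩
    · obtain ⟨Lw, hI, hres⟩ := hu w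
      exact ⟨_, trace_seg hcode hqr x y z true w k Lw (u w)
        (fun j hj => hI j hj) hres⟩
  obtain ⟨T, hTI, hTres⟩ := htop
  have main : ∀ n, n ≤ T.length → ∃ LL,
      Trace (code := code) (q := q) (r := r) x y z (init a) LL
        (.inner true (code (a :: T.take n)) [] (.c3x a (T.take n))) := by
    intro n
    induction n with
    | zero =>
      intro _
      obtain ⟨L1, h1⟩ := hseg true a (.c1 a)
      obtain ⟨L2, h2⟩ := hseg false a (.c2 a)
      exact ⟨L1 ++ L2, trace_append h1 h2⟩
    | succ n ih =>
      intro hn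
      have hn' : n < T.length := hn
      obtain ⟨LL, hLL⟩ := ih (le_of_lt hn')
      obtain ⟨b, hub, hvb⟩ := hTI n hn'
      obtain ⟨Lx, hx⟩ := hseg true (code (a :: T.take n)) (.c3x a (T.take n))
      obtain ⟨Ly, hy⟩ := hseg false b (.c3y a (T.take n))
      have hts : T.take (n+1) = T.take n ++ [T[n]'hn'] := by
        rw [List.take_succ, List.getElem?_eq_getElem hn']; rfl
      have e1 : applyK code q r (.c3x a (T.take n)) (mfun u v true (code (a :: T.take n)))
          = .inner false b [] (.c3y a (T.take n)) := by
        show applyK code q r (.c3x a (T.take n)) (u (code (a :: T.take n)))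
          = .inner false b [] (.c3y a (T.take n))
        rw [hub]
        simp only [applyK, classify_q hcode]
      have e2 : applyK code q r (.c3y a (T.take n)) (mfun u v false b)
          = .inner true (code (a :: T.take (n+1))) [] (.c3x a (T.take (n+1))) := by
        show applyK code q r (.c3y a (T.take n)) (v b)
          = .inner true (code (a :: T.take (n+1))) [] (.c3x a (T.take (n+1)))
        rw [hvb, hts]
        rfl
      rw [e1] at hx
      rw [e2] at hy
      exact ⟨LL ++ (Lx ++ Ly), trace_append hLL (trace_append hx hy)⟩
  obtain ⟨LL, hLL⟩ := main T.length le_rfl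
  rw [List.take_length] at hLL
  obtain ⟨Lf, hf⟩ := hseg true (code (a :: T)) (.c3x a T)
  have e3 : applyK code q r (.c3x a T) (mfun u v true (code (a :: T))) = .halt c := by
    show applyK code q r (.c3x a T) (u (code (a :: T))) = .halt c
    rw [hTres]
    simp only [applyK, classify_r hcode hqr]
  rw [e3] at hf
  obtain ⟨hrun, hem⟩ := trace_append hLL hf
  refine (phiA_mk_iff hcode hqr (sigGen code q r x y) a z c).2 ⟨LL ++ Lf, fun j hj => ?_, ?_⟩
  · obtain ⟨b, hb1, hb2⟩ := hem j hj
    refine ⟨b, ?_, hb2⟩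
    simp only [sigGen, hb1]
    rfl
  · have hout : out code q r (tot x) (tot y) (init a) (LL ++ Lf) = .res (some c) := by
      unfold out
      rw [hrun]
      rfl
    simp only [sigGen, hout]
    rfl

theorem exit_inner (hcode : Function.Injective code) (hqr : q ≠ r) (x y z : A → A)
    (m : Bool) (w : A) (k : Cont A) (c : A) :
    ∀ (L as : List A),
      runS code q r (tot x) (tot y) (.inner m w as k) L = .halt c →
      (∀ j (hj : j < L.length), ∃ b,
        out code q r (tot x) (tot y) (.inner m w as k) (L.take j) = .ask b ∧ z b = L[j]'hj) →
      ∃ L1 e L2 d, L = L1 ++ e :: L2 ∧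
        (∀ j (hj : j < L1.length), ∃ b,
          mfun x y m (code (w :: (as ++ L1.take j))) = code [q, b] ∧ z b = L1[j]'hj) ∧
        mfun x y m (code (w :: (as ++ L1))) = code [r, d] ∧
        runS code q r (tot x) (tot y) (applyK code q r k d) L2 = .halt c ∧
        (∀ j (hj : j < L2.length), ∃ b,
          out code q r (tot x) (tot y) (applyK code q r k d) (L2.take j) = .ask b ∧
            z b = L2[j]'hj) := by
  intro L
  induction L with
  | nil =>
    intro as hrun _
    simp [runS] at hrun
  | cons v L ih =>
    intro as hrun hem
    rcases hcl : classify code q r (mfun x y m (code (w :: as))) with _ | ⟨mb, b⟩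
    · exfalso
      have hst : step code q r (tot x) (tot y) (.inner m w as k) v = .dead := by
        simp only [step, look_tot, hcl]
      rw [runS_cons, hst, runS_dead] at hrun
      cases hrun
    · cases mb
      · have hval := classify_inv_r hcl
        have hst : step code q r (tot x) (tot y) (.inner m w as k) v = applyK code q r k b :=
          step_inner_r hcode hqr x y k hval v
        rw [runS_cons, hst] at hrun
        refine ⟨[], v, L, b, rfl, fun j hj => absurd hj (by simp), ?_, hrun, ?_⟩
        · rw [List.append_nil]; exact hval
        · intro j hj
          obtain ⟨b', h1, h2⟩ := hem (j+1) (by simpa using Nat.succ_lt_succ hj)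
          rw [List.take_succ_cons, out_cons, hst] at h1
          exact ⟨b', h1, h2⟩
      · have hval := classify_inv_q hcl
        have hst : step code q r (tot x) (tot y) (.inner m w as k) v
            = .inner m w (as ++ [v]) k := step_inner_q hcode x y k hval v
        rw [runS_cons, hst] at hrun
        have hem' : ∀ j (hj : j < L.length), ∃ b',
            out code q r (tot x) (tot y) (.inner m w (as ++ [v]) k) (L.take j) = .ask b' ∧
            z b' = L[j]'hj := by
          intro j hj
          obtain ⟨b', h1, h2⟩ := hem (j+1) (by simpa using Nat.succ_lt_succ hj)
          rw [List.take_succ_cons, out_cons, hst] at h1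
          exact ⟨b', h1, h2⟩
        obtain ⟨L1, e, L2, d, hsplit, hint, hres, hrun2, hem2⟩ := ih (as ++ [v]) hrun hem'
        have hzv : z b = v := by
          obtain ⟨b'', h1, h2⟩ := hem 0 (by simp)
          rw [List.take_zero, out_nil, outOf_inner_q hcode x y k hval] at h1
          injection h1 with h1'
          rw [h1']
          simpa using h2
        refine ⟨v :: L1, e, L2, d, by rw [hsplit, List.cons_append], ?_, ?_, hrun2, hem2⟩
        · intro j hj
          cases j with
          | zero =>
            refine ⟨b, ?_, by simpa using hzv⟩
            rw [List.take_zero, List.append_nil]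
            exact hval
          | succ n =>
            have hn : n < L1.length := by simpa using hj
            obtain ⟨b', h1, h2⟩ := hint n hn
            refine ⟨b', ?_, by simpa using h2⟩
            rw [List.take_succ_cons, List.append_cons]
            exact h1
        · rw [List.append_cons]
          exact hres

theorem top_loop (hcode : Function.Injective code) (hqr : q ≠ r) (x y z u v : A → A)
    (hu : ∀ w, phiA code (fun t => code [q, t]) (fun t => code [r, t]) w x z (u w))
    (hv : ∀ w, phiA code (fun t => code [q, t]) (fun t => code [r, t]) w y z (v w))
    (a c : A) :
    ∀ (N : ℕ) (L T : List A), L.length ≤ N →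
      runS code q r (tot x) (tot y) (.inner true (code (a :: T)) [] (.c3x a T)) L = .halt c →
      (∀ j (hj : j < L.length), ∃ b,
        out code q r (tot x) (tot y) (.inner true (code (a :: T)) [] (.c3x a T)) (L.take j)
          = .ask b ∧ z b = L[j]'hj) →
      (∀ j (hj : j < T.length), ∃ b,
        u (code (a :: T.take j)) = code [q, b] ∧ v b = T[j]'hj) →
      phiA code (fun t => code [q, t]) (fun t => code [r, t]) a u v c := by
  intro N
  induction N with
  | zero =>
    intro L T hlen hrun _ _
    have : L = [] := List.length_eq_zero_iff.mp (Nat.le_zero.mp hlen)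
    subst this
    simp [runS] at hrun
  | succ N ih =>
    intro L T hlen hrun hem hT
    obtain ⟨L1, e, L2, d, hsplit, hint, hres, hrun2, hem2⟩ :=
      exit_inner hcode hqr x y z true (code (a :: T)) (.c3x a T) c L [] hrun hem
    have hphix : phiA code (fun t => code [q, t]) (fun t => code [r, t]) (code (a :: T)) x z d :=
      ⟨L1, fun j hj => by
        obtain ⟨b, h1, h2⟩ := hint j hj
        exact ⟨b, by simpa [mfun] using h1, h2⟩, by simpa [mfun] using hres⟩
    have hud : u (code (a :: T)) = d := phiA_fun hcode hqr (hu _) hphix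
    rcases hcld : classify code q r d with _ | ⟨mb, b⟩
    · exfalso
      have happ : applyK code q r (.c3x a T) d = .dead := by simp only [applyK, hcld]
      rw [happ, runS_dead] at hrun2
      cases hrun2
    · cases mb
      · -- final result
        have happ : applyK code q r (.c3x a T) d = .halt b := by simp only [applyK, hcld]
        rw [happ] at hrun2
        have hbc : b = c := by
          cases L2 with
          | nil => simpa [runS] using hrun2
          | cons v' L2' =>
            rw [runS_cons] at hrun2
            have hd : step code q r (tot x) (tot y) (.halt b) v' = .dead := rfl
            rw [hd, runS_dead] at hrun2
            cases hrun2
        subst hbc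
        exact ⟨T, fun j hj => hT j hj, by rw [hud]; exact classify_inv_r hcld⟩
      · -- next top-level query
        have happ : applyK code q r (.c3x a T) d = .inner false b [] (.c3y a T) := by
          simp only [applyK, hcld]
        rw [happ] at hrun2 hem2
        obtain ⟨L3, e', L4, d', hsplit2, hint2, hres2, hrun3, hem3⟩ :=
          exit_inner hcode hqr x y z false b (.c3y a T) c L2 [] hrun2 hem2
        have hphiy : phiA code (fun t => code [q, t]) (fun t => code [r, t]) b y z d' :=
          ⟨L3, fun j hj => by
            obtain ⟨bb, h1, h2⟩ := hint2 j hj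
            exact ⟨bb, by simpa [mfun] using h1, h2⟩, by simpa [mfun] using hres2⟩
        have hvd : v b = d' := phiA_fun hcode hqr (hv _) hphiy
        have happ2 : applyK code q r (.c3y a T) d'
            = .inner true (code (a :: (T ++ [d']))) [] (.c3x a (T ++ [d'])) := rfl
        rw [happ2] at hrun3 hem3
        have hlen4 : L4.length ≤ N := by
          have h5 := hlen
          rw [hsplit, hsplit2] at h5
          simp only [List.length_append, List.length_cons] at h5
          omega
        refine ih L4 (T ++ [d']) hlen4 hrun3 hem3 ?_
        intro j hj
        rcases Nat.lt_or_ge j T.length with hlt | hge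
        · obtain ⟨bb, h1, h2⟩ := hT j hlt
          refine ⟨bb, ?_, ?_⟩
          · rw [List.take_append_of_le_length (le_of_lt hlt)]
            exact h1
          · rw [List.getElem_append_left hlt]
            exact h2
        · have hj' : j = T.length := by
            simp only [List.length_append, List.length_cons, List.length_nil] at hj
            omega
          subst hj'
          refine ⟨b, ?_, ?_⟩
          · rw [List.take_append_of_le_length le_rfl, List.take_length, hud]
            exact classify_inv_q hcld
          · rw [hvd]
            exact (List.getElem_concat_length (l := T) (a := d') (i := T.length) rfl (by simp)).symm

theorem sig_anal (hcode : Function.Injective code) (hqr : q ≠ r) (x y z : A → A) {a c : A}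
    (h : phiA code (fun t => code [q, t]) (fun t => code [r, t]) a (Sig code q r x y) z c) :
    (∃ d, phiA code (fun t => code [q, t]) (fun t => code [r, t]) a x z d) ∧
    (∃ d, phiA code (fun t => code [q, t]) (fun t => code [r, t]) a y z d) ∧
    (∀ u v, (∀ w, phiA code (fun t => code [q, t]) (fun t => code [r, t]) w x z (u w)) →
      (∀ w, phiA code (fun t => code [q, t]) (fun t => code [r, t]) w y z (v w)) →
      phiA code (fun t => code [q, t]) (fun t => code [r, t]) a u v c) := by
  obtain ⟨M, hpre, hfin⟩ := (phiA_mk_iff hcode hqr (sigGen code q r x y) a z c).1 h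
  have hout : out code q r (tot x) (tot y) (init a) M = .res (some c) := by
    rcases ho : out code q r (tot x) (tot y) (init a) M with b | o | ⟨m, p⟩
    · rw [show sigGen code q r x y a M = o2g (out code q r (tot x) (tot y) (init a) M) from rfl,
        ho] at hfin
      simp [o2g] at hfin
    · rw [show sigGen code q r x y a M = o2g (out code q r (tot x) (tot y) (init a) M) from rfl,
        ho] at hfin
      simp only [o2g] at hfin
      injection hfin with h'
      rw [h']
    · rw [show sigGen code q r x y a M = o2g (out code q r (tot x) (tot y) (init a) M) from rfl,
        ho] at hfin
      simp [o2g] at hfin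
  have hrun : runS code q r (tot x) (tot y) (init a) M = .halt c := by
    rcases hs : runS code q r (tot x) (tot y) (init a) M with ⟨m, w, as, k⟩ | c' | _ | ⟨m, p⟩
    · exfalso
      unfold out at hout
      rw [hs] at hout
      rcases hcl : classify code q r (mfun x y m (code (w :: as))) with _ | ⟨mb, b⟩ <;>
        [skip; rcases mb with _|_] <;>
        simp only [outOf, look_tot, hcl] at hout <;> simp at hout
    · unfold out at hout
      rw [hs] at hout
      injection hout with h'
      injection h' with h''
      rw [h'']
    · unfold out at hout
      rw [hs] at hout
      simp [outOf] at hout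
    · unfold out at hout
      rw [hs] at hout
      simp [outOf] at hout
  have hem : ∀ j (hj : j < M.length), ∃ b,
      out code q r (tot x) (tot y) (init a) (M.take j) = .ask b ∧ z b = M[j]'hj := by
    intro j hj
    obtain ⟨b, h1, h2⟩ := hpre j hj
    refine ⟨b, ?_, h2⟩
    rcases ho : out code q r (tot x) (tot y) (init a) (M.take j) with b' | o | ⟨m, p⟩
    · rw [show sigGen code q r x y a (M.take j)
          = o2g (out code q r (tot x) (tot y) (init a) (M.take j)) from rfl, ho] at h1
      simp only [o2g] at h1
      injection h1 with h'
      rw [h']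
    · rw [show sigGen code q r x y a (M.take j)
          = o2g (out code q r (tot x) (tot y) (init a) (M.take j)) from rfl, ho] at h1
      simp [o2g] at h1
    · rw [show sigGen code q r x y a (M.take j)
          = o2g (out code q r (tot x) (tot y) (init a) (M.take j)) from rfl, ho] at h1
      simp [o2g] at h1
  obtain ⟨L1, e1, L2, d1, hsp1, hint1, hres1, hrun1, hem1⟩ :=
    exit_inner hcode hqr x y z true a (.c1 a) c M [] hrun hem
  have hx : phiA code (fun t => code [q, t]) (fun t => code [r, t]) a x z d1 :=
    ⟨L1, fun j hj => by
      obtain ⟨b, h1, h2⟩ := hint1 j hj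
      exact ⟨b, by simpa [mfun] using h1, h2⟩, by simpa [mfun] using hres1⟩
  have happ1 : applyK code q r (.c1 a) d1 = .inner false a [] (.c2 a) := rfl
  rw [happ1] at hrun1 hem1
  obtain ⟨L3, e2, L4, d2, hsp2, hint2, hres2, hrun2, hem2⟩ :=
    exit_inner hcode hqr x y z false a (.c2 a) c L2 [] hrun1 hem1
  have hy : phiA code (fun t => code [q, t]) (fun t => code [r, t]) a y z d2 :=
    ⟨L3, fun j hj => by
      obtain ⟨b, h1, h2⟩ := hint2 j hj
      exact ⟨b, by simpa [mfun] using h1, h2⟩, by simpa [mfun] using hres2⟩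
  have happ2 : applyK code q r (.c2 a) d2 = .inner true (code [a]) [] (.c3x a []) := rfl
  rw [happ2] at hrun2 hem2
  refine ⟨⟨d1, hx⟩, ⟨d2, hy⟩, fun u v hu hv => ?_⟩
  exact top_loop hcode hqr x y z u v hu hv a c L4.length L4 [] le_rfl hrun2 hem2
    (fun j hj => absurd hj (by simp))

/-! ### the combinators -/

variable (code q r)

def encO (o : Option A) : A :=
  match o, q with
  | some c, _ => code [r, c]
  | none, _ => code []

def tGo (x : A → A) (a : A) (L : List A) : List A → (A → Option A) → A ⊕ Option A
  | [], yo =>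
    (match out code q r (tot x) yo (init a) L with
     | .need false pt => .inl pt
     | .need true _ => .inr none
     | .ask b => .inr (some (code [q, b]))
     | .res o => .inr (some (encO code q r o)))
  | v :: M, yo =>
    (match out code q r (tot x) yo (init a) L with
     | .need false pt => tGo x a L M (update yo pt v)
     | _ => .inr none)

def tGen (x : A → A) (pt : A) (M : List A) : A ⊕ Option A :=
  match dec code pt with
  | some (a :: L) => tGo code q r x a L M (fun _ => none)
  | _ => .inr (some (code []))

def Tau (x : A → A) : A → A := mkMachine code q r (tGen code q r x)

def sGo (a : A) (L : List A) (M Mx : List A) (xo yo : A → Option A) : A ⊕ Option A :=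
    match out code q r xo yo (init a) L, M, Mx with
    | .need true pt, _, [] => .inl pt
    | .need true pt, M, v :: Mx' => sGo a L M Mx' (update xo pt v) yo
    | .need false pt, [], [] => .inr (some (code [q, pt]))
    | .need false _, [], _ :: _ => .inr none
    | .need false pt, v :: M', Mx => sGo a L M' Mx xo (update yo pt v)
    | .ask b, [], [] => .inr (some (code [r, code [q, b]]))
    | .ask _, _ :: _, [] => .inr (some (code []))
    | .ask _, _, _ :: _ => .inr none
    | .res o, [], [] => .inr (some (code [r, encO code q r o]))
    | .res _, _ :: _, [] => .inr (some (code []))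
    | .res _, _, _ :: _ => .inr none
  termination_by M.length + Mx.length

def sGen (p : A) (Mx : List A) : A ⊕ Option A :=
  match dec code p with
  | some (pt :: M) =>
    (match dec code pt with
     | some (a :: L) => sGo code q r a L M Mx (fun _ => none) (fun _ => none)
     | _ => .inr (some (code [r, code []])))
  | _ => .inr (some (code []))

def Sel : A → A := mkMachine code q r (sGen code q r)

def kGen (p : A) (M : List A) : A ⊕ Option A :=
  match dec code p, q with
  | some (a :: _), _ =>
    (match M with
     | [] => .inl a
     | [v] => .inr (some (code [r, v]))
     | _ => .inr none)
  | _, _ => .inr (some (code []))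

def Kel : A → A := mkMachine code q r (kGen code q r)

def KxGen (x : A → A) (a : A) (_ : List A) : A ⊕ Option A := .inr (some (x a))

def Kx (x : A → A) : A → A := mkMachine code q r (KxGen x)

variable {code q r}

/-! ### correctness of `k` -/

theorem phiA_Kx (hcode : Function.Injective code) (hqr : q ≠ r) (x β : A → A) (a : A) :
    phiA code (fun t => code [q, t]) (fun t => code [r, t]) a (Kx code q r x) β (x a) :=
  (phiA_mk_iff hcode hqr (KxGen x) a β (x a)).2
    ⟨[], fun j hj => absurd hj (by simp), rfl⟩

theorem phiA_K (hcode : Function.Injective code) (hqr : q ≠ r) (x : A → A) (p : A) :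
    phiA code (fun t => code [q, t]) (fun t => code [r, t]) p (Kel code q r) x
      (Kx code q r x p) := by
  refine (phiA_mk_iff hcode hqr (kGen code q r) p x _).2 ?_
  rcases hd : dec code p with _ | (_ | ⟨a, L⟩)
  · refine ⟨[], fun j hj => absurd hj (by simp), ?_⟩
    unfold kGen Kx mkMachine
    rw [hd]
  · refine ⟨[], fun j hj => absurd hj (by simp), ?_⟩
    unfold kGen Kx mkMachine
    rw [hd]
  · refine ⟨[x a], fun j hj => ?_, ?_⟩
    · have hj0 : j = 0 := by simpa using hj
      subst hj0
      refine ⟨a, ?_, rfl⟩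
      unfold kGen
      rw [hd]
      simp
    · unfold kGen Kx mkMachine
      rw [hd]
      simp [encT, KxGen]

/-! ### correctness of `Tau` -/

theorem look_sub_left {x : A → A} {yo yo' : A → Option A} (hsub : osub yo yo') :
    ∀ (m : Bool) (p val : A), look (tot x) yo m p = some val → look (tot x) yo' m p = some val := by
  rintro (_ | _) p val h
  · exact hsub p val h
  · exact h

theorem look_sub_x {xo xo' yo : A → Option A} (hsub : osub xo xo') :
    ∀ (m : Bool) (p val : A), look xo yo m p = some val → look xo' yo m p = some val := by
  rintro (_ | _) p val h
  · exact h
  · exact hsub p val h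

theorem init_ne_need (a : A) : ∀ (m : Bool) (p' : A), init a ≠ St.need m p' := by
  intro m p' h
  cases h

theorem tGo_correct (hcode : Function.Injective code) (hqr : q ≠ r)
    (x y : A → A) (a : A) (L : List A) :
    ∀ (n : ℕ) (yo : A → Option A), osub yo (tot y) →
      L.length + 2 ≤ surv code q r (tot x) yo (init a) L + n →
      ∃ M : List A,
        (∀ j (hj : j < M.length), ∃ pt,
          tGo code q r x a L (M.take j) yo = .inl pt ∧ y pt = M[j]'hj) ∧
        tGo code q r x a L M yo
          = .inr (some (Sig code q r x y (code (a :: L)))) := by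
  have hSig : Sig code q r x y (code (a :: L))
      = encT code q r (o2g (out code q r (tot x) (tot y) (init a) L)) := by
    unfold Sig
    rw [mkMachine_code code q r hcode]
    rfl
  intro n
  induction n with
  | zero =>
    intro yo hsub hn
    exact absurd hn
      (by have := surv_le (code := code) (q := q) (r := r) (tot x) yo L (init a); omega)
  | succ n ih =>
    intro yo hsub hn
    rcases ho : out code q r (tot x) yo (init a) L with b | o | ⟨m, pt⟩
    · have hne : ∀ (m : Bool) (p : A), out code q r (tot x) yo (init a) L ≠ .need m p := by
        rw [ho]; intro m p h; cases h
      have hstab : out code q r (tot x) (tot y) (init a) L = .ask b := by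
        rw [ext_stable (look_sub_left hsub) L (init a) hne, ho]
      refine ⟨[], fun j hj => absurd hj (by simp), ?_⟩
      simp only [tGo, ho, hSig, hstab]
      rfl
    · have hne : ∀ (m : Bool) (p : A), out code q r (tot x) yo (init a) L ≠ .need m p := by
        rw [ho]; intro m p h; cases h
      have hstab : out code q r (tot x) (tot y) (init a) L = .res o := by
        rw [ext_stable (look_sub_left hsub) L (init a) hne, ho]
      refine ⟨[], fun j hj => absurd hj (by simp), ?_⟩
      simp only [tGo, ho, hSig, hstab]
      rcases o with _ | c <;> rfl
    · cases m
      · -- need false: query y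
        have hnone : yo pt = none :=
          out_need_none L (init a) (fun p' h => by cases h) ho
        have hsub' := osub_update_tot hsub pt
        have hupd : look (tot x) (update yo pt (y pt)) false pt = some (y pt) :=
          update_self yo pt (y pt)
        have hprog := surv_progress (look_update_y hnone (y pt))
          ⟨y pt, hupd⟩ L (init a) (fun m' p' h => by cases h) ho
        obtain ⟨M, h1, h2⟩ := ih (update yo pt (y pt)) hsub' (by omega)
        refine ⟨y pt :: M, ?_, ?_⟩
        · intro j hj
          cases j with
          | zero =>
            refine ⟨pt, ?_, by simp⟩
            simp only [List.take_zero, tGo, ho]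
          | succ jn =>
            have hjn : jn < M.length := by simpa using hj
            obtain ⟨pt', hh1, hh2⟩ := h1 jn hjn
            refine ⟨pt', ?_, by simpa using hh2⟩
            rw [List.take_succ_cons]
            simp only [tGo, ho]
            exact hh1
        · simp only [tGo, ho]
          exact h2
      · -- need true: impossible (x total)
        exact absurd ho (out_no_need_total (fun p h => by simp [look, tot] at h)
          L (init a) (fun p' h => by cases h) pt)

theorem tau_phiA (hcode : Function.Injective code) (hqr : q ≠ r) (x y : A → A) (p : A) :
    phiA code (fun t => code [q, t]) (fun t => code [r, t]) p (Tau code q r x) y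
      (Sig code q r x y p) := by
  refine (phiA_mk_iff hcode hqr (tGen code q r x) p y _).2 ?_
  rcases hd : dec code p with _ | (_ | ⟨a, L⟩)
  · refine ⟨[], fun j hj => absurd hj (by simp), ?_⟩
    unfold tGen Sig mkMachine
    rw [hd]
  · refine ⟨[], fun j hj => absurd hj (by simp), ?_⟩
    unfold tGen Sig mkMachine
    rw [hd]
  · have hemp : osub (fun _ => none) (tot y) := fun p v h => by cases h
    obtain ⟨M, h1, h2⟩ := tGo_correct hcode hqr x y a L (L.length + 2) (fun _ => none) hemp
      (Nat.le_add_left _ _)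
    refine ⟨M, fun j hj => ?_, ?_⟩
    · obtain ⟨pt, hh1, hh2⟩ := h1 j hj
      refine ⟨pt, ?_, hh2⟩
      unfold tGen
      rw [hd]
      exact hh1
    · unfold tGen
      rw [hd, ← dec_some hd]
      exact h2

theorem app_Tau (hcode : Function.Injective code) (hqr : q ≠ r) (x y : A → A) :
    (K2 code (fun t => code [q, t]) (fun t => code [r, t])).app (Tau code q r x) y
      = Part.some (Sig code q r x y) :=
  app_eq_some hcode hqr _ _ _ (fun p => tau_phiA hcode hqr x y p)

/-! ### correctness of `Sel` -/

theorem sGo_correct (hcode : Function.Injective code) (hqr : q ≠ r)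
    (x : A → A) (a : A) (L : List A) :
    ∀ (M : List A) (n : ℕ) (xo yo : A → Option A), osub xo (tot x) →
      L.length + 2 ≤ surv code q r xo yo (init a) L + n →
      ∃ Mx : List A,
        (∀ j (hj : j < Mx.length), ∃ pt,
          sGo code q r a L M (Mx.take j) xo yo = .inl pt ∧ x pt = Mx[j]'hj) ∧
        sGo code q r a L M Mx xo yo
          = .inr (some (encT code q r (tGo code q r x a L M yo))) := by
  intro M
  induction M with
  | nil =>
    intro n
    induction n with
    | zero =>
      intro xo yo hsub hn
      exact absurd hn
        (by have := surv_le (code := code) (q := q) (r := r) xo yo L (init a); omega)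
    | succ n ihn =>
      intro xo yo hsub hn
      rcases ho : out code q r xo yo (init a) L with b | o | ⟨m, pt⟩
      · have hne : ∀ (m : Bool) (pp : A), out code q r xo yo (init a) L ≠ .need m pp := by
          rw [ho]; intro m pp h; cases h
        have hstab : out code q r (tot x) yo (init a) L = .ask b := by
          rw [ext_stable (look_sub_x hsub) L (init a) hne, ho]
        refine ⟨[], fun j hj => absurd hj (by simp), ?_⟩
        rw [sGo.eq_def, ho]
        simp only [tGo, hstab]
        rfl
      · have hne : ∀ (m : Bool) (pp : A), out code q r xo yo (init a) L ≠ .need m pp := by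
          rw [ho]; intro m pp h; cases h
        have hstab : out code q r (tot x) yo (init a) L = .res o := by
          rw [ext_stable (look_sub_x hsub) L (init a) hne, ho]
        refine ⟨[], fun j hj => absurd hj (by simp), ?_⟩
        rw [sGo.eq_def, ho]
        simp only [tGo, hstab]
        rfl
      · cases m
        · have hnoneY : ∀ pp, look xo yo false pp = none → look (tot x) yo false pp = none :=
            fun pp h => h
          have hstab : out code q r (tot x) yo (init a) L = .need false pt :=
            ext_need hnoneY (look_sub_x hsub) L (init a) ho
          refine ⟨[], fun j hj => absurd hj (by simp), ?_⟩
          rw [sGo.eq_def, ho]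
          simp [tGo, hstab, encT]
        · have hnone : xo pt = none :=
            out_need_none L (init a) (fun p' h => by cases h) ho
          have hupd : look (update xo pt (x pt)) yo true pt = some (x pt) :=
            update_self xo pt (x pt)
          have hprog := surv_progress (look_update_x hnone (x pt))
            ⟨x pt, hupd⟩ L (init a) (fun m' p' h => by cases h) ho
          obtain ⟨Mx, h1, h2⟩ := ihn (update xo pt (x pt)) yo (osub_update_tot hsub pt)
            (by omega)
          refine ⟨x pt :: Mx, ?_, ?_⟩
          · intro j hj
            cases j with
            | zero =>
              refine ⟨pt, ?_, by simp⟩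
              rw [List.take_zero, sGo.eq_def, ho]
            | succ jn =>
              obtain ⟨pt', hh1, hh2⟩ := h1 jn (by simpa using hj)
              refine ⟨pt', ?_, by simpa using hh2⟩
              rw [List.take_succ_cons, sGo.eq_def, ho]
              exact hh1
          · rw [sGo.eq_def, ho]
            exact h2
  | cons v M' ihM =>
    intro n
    induction n with
    | zero =>
      intro xo yo hsub hn
      exact absurd hn
        (by have := surv_le (code := code) (q := q) (r := r) xo yo L (init a); omega)
    | succ n ihn =>
      intro xo yo hsub hn
      rcases ho : out code q r xo yo (init a) L with b | o | ⟨m, pt⟩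
      · have hne : ∀ (m : Bool) (pp : A), out code q r xo yo (init a) L ≠ .need m pp := by
          rw [ho]; intro m pp h; cases h
        have hstab : out code q r (tot x) yo (init a) L = .ask b := by
          rw [ext_stable (look_sub_x hsub) L (init a) hne, ho]
        refine ⟨[], fun j hj => absurd hj (by simp), ?_⟩
        rw [sGo.eq_def, ho]
        simp [tGo, hstab, encT]
      · have hne : ∀ (m : Bool) (pp : A), out code q r xo yo (init a) L ≠ .need m pp := by
          rw [ho]; intro m pp h; cases h
        have hstab : out code q r (tot x) yo (init a) L = .res o := by
          rw [ext_stable (look_sub_x hsub) L (init a) hne, ho]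
        refine ⟨[], fun j hj => absurd hj (by simp), ?_⟩
        rw [sGo.eq_def, ho]
        simp [tGo, hstab, encT]
      · cases m
        · have hnoneY : ∀ pp, look xo yo false pp = none → look (tot x) yo false pp = none :=
            fun pp h => h
          have hstab : out code q r (tot x) yo (init a) L = .need false pt :=
            ext_need hnoneY (look_sub_x hsub) L (init a) ho
          obtain ⟨Mx, h1, h2⟩ := ihM (L.length + 2) xo (update yo pt v) hsub
            (Nat.le_add_left _ _)
          refine ⟨Mx, ?_, ?_⟩
          · intro j hj
            obtain ⟨pt', hh1, hh2⟩ := h1 j hj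
            refine ⟨pt', ?_, hh2⟩
            rw [sGo.eq_def, ho]
            exact hh1
          · rw [sGo.eq_def, ho]
            show sGo code q r a L M' Mx xo (update yo pt v)
              = .inr (some (encT code q r (tGo code q r x a L (v :: M') yo)))
            rw [h2]
            simp [tGo, hstab]
        · have hnone : xo pt = none :=
            out_need_none L (init a) (fun p' h => by cases h) ho
          have hupd : look (update xo pt (x pt)) yo true pt = some (x pt) :=
            update_self xo pt (x pt)
          have hprog := surv_progress (look_update_x hnone (x pt))
            ⟨x pt, hupd⟩ L (init a) (fun m' p' h => by cases h) ho
          obtain ⟨Mx, h1, h2⟩ := ihn (update xo pt (x pt)) yo (osub_update_tot hsub pt)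
            (by omega)
          refine ⟨x pt :: Mx, ?_, ?_⟩
          · intro j hj
            cases j with
            | zero =>
              refine ⟨pt, ?_, by simp⟩
              rw [List.take_zero, sGo.eq_def, ho]
            | succ jn =>
              obtain ⟨pt', hh1, hh2⟩ := h1 jn (by simpa using hj)
              refine ⟨pt', ?_, by simpa using hh2⟩
              rw [List.take_succ_cons, sGo.eq_def, ho]
              exact hh1
          · rw [sGo.eq_def, ho]
            exact h2

theorem s_phiA (hcode : Function.Injective code) (hqr : q ≠ r) (x : A → A) (p : A) :
    phiA code (fun t => code [q, t]) (fun t => code [r, t]) p (Sel code q r) x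
      (Tau code q r x p) := by
  refine (phiA_mk_iff hcode hqr (sGen code q r) p x _).2 ?_
  rcases hd : dec code p with _ | (_ | ⟨pt, M⟩)
  · refine ⟨[], fun j hj => absurd hj (by simp), ?_⟩
    unfold sGen Tau mkMachine
    rw [hd]
  · refine ⟨[], fun j hj => absurd hj (by simp), ?_⟩
    unfold sGen Tau mkMachine
    rw [hd]
  · rcases hd2 : dec code pt with _ | (_ | ⟨a, L⟩)
    · refine ⟨[], fun j hj => absurd hj (by simp), ?_⟩
      simp only [sGen, Tau, mkMachine, tGen, hd, hd2, encT]
    · refine ⟨[], fun j hj => absurd hj (by simp), ?_⟩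
      simp only [sGen, Tau, mkMachine, tGen, hd, hd2, encT]
    · obtain ⟨Mx, h1, h2⟩ := sGo_correct hcode hqr x a L M (L.length + 2)
        (fun _ => none) (fun _ => none) (fun p' v h => by cases h) (Nat.le_add_left _ _)
      refine ⟨Mx, fun j hj => ?_, ?_⟩
      · obtain ⟨pt', hh1, hh2⟩ := h1 j hj
        refine ⟨pt', ?_, hh2⟩
        simp only [sGen, hd, hd2]
        exact hh1
      · simp only [sGen, Tau, mkMachine, tGen, hd, hd2]
        exact h2

theorem app_Sel (hcode : Function.Injective code) (hqr : q ≠ r) (x : A → A) :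
    (K2 code (fun t => code [q, t]) (fun t => code [r, t])).app (Sel code q r) x
      = Part.some (Tau code q r x) :=
  app_eq_some hcode hqr _ _ _ (fun p => s_phiA hcode hqr x p)

/-! ### the main theorem -/

theorem isPCA_K2 (hcode : Function.Injective code) (hqr : q ≠ r) :
    IsPCA (K2 code (fun v => code [q, v]) (fun v => code [r, v])) := by
  refine ⟨Kel code q r, Sel code q r, ?_, ?_, ?_⟩
  · intro x y
    have h1 : (K2 code (fun v => code [q, v]) (fun v => code [r, v])).app (Kel code q r) x
        = Part.some (Kx code q r x) :=
      app_eq_some hcode hqr _ _ _ (fun p => phiA_K hcode hqr x p)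
    simp only [pap, h1, Part.bind_some]
    exact app_eq_some hcode hqr _ _ _ (fun a => phiA_Kx hcode hqr x y a)
  · intro x y
    simp only [pap, app_Sel hcode hqr x, Part.bind_some, app_Tau hcode hqr x y]
    trivial
  · intro x y z
    have hL : pap (K2 code (fun v => code [q, v]) (fun v => code [r, v]))
        (pap (K2 code (fun v => code [q, v]) (fun v => code [r, v]))
          ((K2 code (fun v => code [q, v]) (fun v => code [r, v])).app (Sel code q r) x)
          (Part.some y)) (Part.some z)
        = (K2 code (fun v => code [q, v]) (fun v => code [r, v])).app (Sig code q r x y) z := by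
      simp only [pap, app_Sel hcode hqr x, Part.bind_some, app_Tau hcode hqr x y]
    rw [hL]
    apply Part.ext
    intro γ
    rw [mem_app_iff hcode hqr]
    constructor
    · intro hγ
      have hDx : ∀ w, ∃ d,
          phiA code (fun v => code [q, v]) (fun v => code [r, v]) w x z d :=
        fun w => (sig_anal hcode hqr x y z (hγ w)).1
      have hDy : ∀ w, ∃ d,
          phiA code (fun v => code [q, v]) (fun v => code [r, v]) w y z d :=
        fun w => (sig_anal hcode hqr x y z (hγ w)).2.1
      have hu : ∀ w, phiA code (fun v => code [q, v]) (fun v => code [r, v]) w x z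
          ((hDx w).choose) := fun w => (hDx w).choose_spec
      have hv : ∀ w, phiA code (fun v => code [q, v]) (fun v => code [r, v]) w y z
          ((hDy w).choose) := fun w => (hDy w).choose_spec
      have hmu : (fun w => (hDx w).choose)
          ∈ (K2 code (fun v => code [q, v]) (fun v => code [r, v])).app x z :=
        (mem_app_iff hcode hqr x z _).2 hu
      have hmv : (fun w => (hDy w).choose)
          ∈ (K2 code (fun v => code [q, v]) (fun v => code [r, v])).app y z :=
        (mem_app_iff hcode hqr y z _).2 hv
      have hγuv : γ ∈ (K2 code (fun v => code [q, v]) (fun v => code [r, v])).app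
          (fun w => (hDx w).choose) (fun w => (hDy w).choose) :=
        (mem_app_iff hcode hqr _ _ γ).2
          (fun a => (sig_anal hcode hqr x y z (hγ a)).2.2 _ _ hu hv)
      exact Part.mem_bind_iff.2 ⟨_, hmu, Part.mem_bind_iff.2 ⟨_, hmv, hγuv⟩⟩
    · intro hγ
      obtain ⟨u, hmu, hrest⟩ := Part.mem_bind_iff.1 hγ
      obtain ⟨v, hmv, hγuv⟩ := Part.mem_bind_iff.1 hrest
      have hu := (mem_app_iff hcode hqr x z u).1 hmu
      have hv := (mem_app_iff hcode hqr y z v).1 hmv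
      have htop := (mem_app_iff hcode hqr u v γ).1 hγuv
      exact fun a => sig_complete hcode hqr x y z u v hu hv (htop a)

end K2Proof

/-- For an infinite set `A`, the set `A^A` with the
interrogation-based partial application is a partial combinatory algebra. -/
theorem statement8 {A : Type u} [Infinite A] (code : List A → A)
    (hcode : Function.Injective code) (q r : A) (hqr : q ≠ r) :
    IsPCA (K2 code (fun x => code [q, x]) (fun x => code [r, x])) := by
  exact K2Proof.isPCA_K2 hcode hqr

end OostenK2
end
end

section
/- Let A be a partial combinatory algebra and let K₂(A) be the interrogation-based partial combinatory algebra on A^A. The map γ(a) = {â}, where â is the constant function with value a, is a decidable applicative morphism A → K₂(A); moreover, every total function A → A is representable with respect to γ. -/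
open Classical

noncomputable section

namespace OostenK2

universe u

variable {A : Type u}

/-! ### Auxiliary material for Statement 9 -/

section Stmt9Aux

variable {A : Type u} (code : List A → A) (q r : A)

/-- A "one-query machine": it queries the oracle once (with dummy key `q`)
and then returns `F a v` where `a` is the input and `v` the oracle's answer. -/
def oneQ (F : A → A → A) : A → A := fun w =>
  if _ : ∃ a₀ : A, w = code [a₀] then code [q, q]
  else if h2 : ∃ pr : A × A, w = code [pr.1, pr.2] then
    code [r, F h2.choose.1 h2.choose.2]
  else w

variable {code} {q r}

lemma oneQ_single (hcode : Function.Injective code) (F : A → A → A) (a : A) :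
    oneQ code q r F (code [a]) = code [q, q] := by
  rw [oneQ, dif_pos ⟨a, rfl⟩]

lemma oneQ_pair (hcode : Function.Injective code) (F : A → A → A) (a x : A) :
    oneQ code q r F (code [a, x]) = code [r, F a x] := by
  have h1 : ¬∃ a₀ : A, code [a, x] = code [a₀] := by
    rintro ⟨a₀, h⟩
    have := hcode h
    simp at this
  have h2 : ∃ pr : A × A, code [a, x] = code [pr.1, pr.2] := ⟨(a, x), rfl⟩
  rw [oneQ, dif_neg h1, dif_pos h2]
  have := hcode h2.choose_spec
  simp only [List.cons.injEq, and_true] at this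
  rw [← this.1, ← this.2]

/-- Values of `φ^a` are unique (for a total oracle `β`). -/
lemma phiA_unique (hcode : Function.Injective code) (hqr : q ≠ r)
    {a : A} {α β : A → A} {c c' : A}
    (h : phiA code (fun x => code [q, x]) (fun x => code [r, x]) a α β c)
    (h' : phiA code (fun x => code [q, x]) (fun x => code [r, x]) a α β c') :
    c = c' := by
  obtain ⟨L, hL, hLr⟩ := h
  obtain ⟨L', hL', hLr'⟩ := h'
  have qp_ne_rp : ∀ b d : A, code [q, b] ≠ code [r, d] := by
    intro b d h
    have := hcode h
    simp only [List.cons.injEq] at this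
    exact hqr this.1
  have aux : ∀ j, j ≤ L.length → j ≤ L'.length → L.take j = L'.take j := by
    intro j
    induction j with
    | zero => simp
    | succ j ih =>
      intro h1 h2
      have hj : j < L.length := Nat.lt_of_succ_le h1
      have hj' : j < L'.length := Nat.lt_of_succ_le h2
      have e := ih hj.le hj'.le
      obtain ⟨b, hb1, hb2⟩ := hL j hj
      obtain ⟨b', hb1', hb2'⟩ := hL' j hj'
      rw [← e] at hb1'
      have hbb : b = b' := by
        have := hcode (hb1.symm.trans hb1')
        simp only [List.cons.injEq] at this
        exact this.2.1
      have hval : L[j] = L'[j] := by rw [← hb2, ← hb2', hbb]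
      have t1 : L.take (j + 1) = L.take j ++ [L[j]] := by
        rw [List.take_succ, List.getElem?_eq_getElem hj]; rfl
      have t2 : L'.take (j + 1) = L'.take j ++ [L'[j]] := by
        rw [List.take_succ, List.getElem?_eq_getElem hj']; rfl
      rw [t1, t2, e, hval]
  have hlen : L.length = L'.length := by
    rcases lt_trichotomy L.length L'.length with hlt | heq | hlt
    · obtain ⟨b, hb1, _⟩ := hL' L.length hlt
      have etake : L'.take L.length = L := by
        rw [← aux L.length le_rfl hlt.le, List.take_length]
      rw [etake, hLr] at hb1
      exact absurd hb1.symm (qp_ne_rp b c)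
    · exact heq
    · obtain ⟨b, hb1, _⟩ := hL L'.length hlt
      have etake : L.take L'.length = L' := by
        rw [aux L'.length hlt.le le_rfl, List.take_length]
      rw [etake, hLr'] at hb1
      exact absurd hb1.symm (qp_ne_rp b c')
  have hLL : L = L' := by
    rw [← List.take_length (l := L), ← List.take_length (l := L'), ← hlen]
    exact aux L.length le_rfl (le_of_eq hlen)
  rw [hLL, hLr'] at hLr
  have := hcode hLr
  simp only [List.cons.injEq] at this
  exact this.2.1.symm

/-- Applying a one-query machine to a constant oracle in `K₂(A)`. -/
lemma oneQ_app (hcode : Function.Injective code) (hqr : q ≠ r)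
    (F : A → A → A) (x : A) :
    (K2 code (fun x => code [q, x]) (fun x => code [r, x])).app
      (oneQ code q r F) (Function.const A x) = Part.some (fun a => F a x) := by
  have key : ∀ a : A, phiA code (fun x => code [q, x]) (fun x => code [r, x]) a
      (oneQ code q r F) (Function.const A x) (F a x) := by
    intro a
    refine ⟨[x], ?_, ?_⟩
    · intro j hj
      have hj0 : j = 0 := Nat.lt_one_iff.mp hj
      subst hj0
      exact ⟨q, oneQ_single hcode F a, rfl⟩
    · exact oneQ_pair hcode F a x
  have hdom : ∀ a : A, ∃ c, phiA code (fun x => code [q, x])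
      (fun x => code [r, x]) a (oneQ code q r F) (Function.const A x) c :=
    fun a => ⟨F a x, key a⟩
  apply Part.ext'
  · exact iff_of_true hdom trivial
  · intro h1 _
    rw [Part.get_some]
    funext a
    exact phiA_unique hcode hqr (h1 a).choose_spec (key a)

end Stmt9Aux

/-- For a pca `A`, the map `γ(a) = {â}` (constant functions) is
a decidable applicative morphism `A → K₂(A)`, and every total function `A → A`
is representable w.r.t. `γ`. -/
theorem statement9 {A : Type u} (code : List A → A)
    (hcode : Function.Injective code) (q r : A) (hqr : q ≠ r)
    (S : PCAStruct A) (hS : IsPCA S) (t f : A) (hb : IsBooleans S t f) :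
    IsAppMor S (K2 code (fun x => code [q, x]) (fun x => code [r, x]))
      (fun a => {Function.const A a}) ∧
    IsDecidableMor (K2 code (fun x => code [q, x]) (fun x => code [r, x]))
      (fun a => {Function.const A a}) t f (Function.const A t) (Function.const A f) ∧
    ∀ g : A → A, ∃ rg,
      RepresentsPFun (K2 code (fun x => code [q, x]) (fun x => code [r, x]))
        (fun a => {Function.const A a}) (fun a => some (g a)) rg := by
  have happly : ∀ (F : A → A → A) (x : A),
      (K2 code (fun x => code [q, x]) (fun x => code [r, x])).app
        (oneQ code q r F) (Function.const A x) = Part.some (fun a => F a x) :=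
    fun F x => oneQ_app hcode hqr F x
  refine ⟨⟨fun x => Set.singleton_nonempty _, ?_⟩, ?_, ?_⟩
  · -- the realizer of application
    refine ⟨oneQ code q r (fun a₀ v => oneQ code q r (fun _ v' =>
        if h : (S.app v v').Dom then (S.app v v').get h else q) a₀), ?_⟩
    intro x x' z hz b hb b' hb'
    rw [Set.mem_singleton_iff] at hb hb'
    subst hb; subst hb'
    obtain ⟨hd, hget⟩ := hz
    refine ⟨Function.const A z, ?_, rfl⟩
    rw [pap, happly, Part.bind_some, Part.bind_some, happly]
    have hval : (fun _ : A =>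
        if h : (S.app x x').Dom then (S.app x x').get h else q)
        = Function.const A z := by
      funext a
      rw [dif_pos hd, hget]
      rfl
    rw [hval]
    exact Part.mem_some _
  · -- decidability
    refine ⟨oneQ code q r (fun _ v => v), ?_, ?_⟩
    · intro b hb
      rw [Set.mem_singleton_iff] at hb
      subst hb
      exact happly _ t
    · intro b hb
      rw [Set.mem_singleton_iff] at hb
      subst hb
      exact happly _ f
  · -- representability of total functions
    intro g
    refine ⟨oneQ code q r (fun _ v => g v), ?_⟩
    intro a x hx b hb
    rw [Set.mem_singleton_iff] at hb
    subst hb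
    have hx' : x = g a := (Option.some.injEq _ _).mp hx.symm
    subst hx'
    refine ⟨Function.const A (g a), ?_, rfl⟩
    rw [happly]
    exact Part.mem_some _

end OostenK2
end
end

section
/- Let A be a pca with K₂(A) based on A, and γ : A → K₂(A) the constant-functions morphism γ(a) = {â}. Then for any decidable applicative morphism δ : A → B such that every total function A → A is representable with respect to δ, there is a greatest (in the preorder on applicative morphisms) decidable applicative morphism ε : K₂(A) → B with εγ ≅ δ; explicitly, ε(α) = { b ∈ B : b represents α w.r.t. δ }. -/
open Classical

noncomputable section

namespace OostenK2

universe u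

variable {A : Type u}

/-! ### Infrastructure: combinatory completeness -/

section Infra

variable {Y : Type v}

/-- Terms over `Y` with numbered variables. -/
inductive Tm (Y : Type v) where
  | var : ℕ → Tm Y
  | con : Y → Tm Y
  | app : Tm Y → Tm Y → Tm Y

/-- Evaluation of terms. -/
def Tm.eval (T : PCAStruct Y) (ρ : ℕ → Y) : Tm Y → Part Y
  | .var n => Part.some (ρ n)
  | .con c => Part.some c
  | .app M N => pap T (M.eval T ρ) (N.eval T ρ)

@[simp] lemma Tm.eval_var (T : PCAStruct Y) (ρ : ℕ → Y) (n : ℕ) :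
    Tm.eval T ρ (.var n) = Part.some (ρ n) := rfl

@[simp] lemma Tm.eval_con (T : PCAStruct Y) (ρ : ℕ → Y) (c : Y) :
    Tm.eval T ρ (.con c) = Part.some c := rfl

@[simp] lemma Tm.eval_app (T : PCAStruct Y) (ρ : ℕ → Y) (M N : Tm Y) :
    Tm.eval T ρ (.app M N) = pap T (M.eval T ρ) (N.eval T ρ) := rfl

/-- Abstraction of variable `n`. -/
def Tm.abs (k s i : Y) (n : ℕ) : Tm Y → Tm Y
  | .var m => if m = n then .con i else .app (.con k) (.var m)
  | .con c => .app (.con k) (.con c)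
  | .app M N => .app (.app (.con s) (Tm.abs k s i n M)) (Tm.abs k s i n N)

variable {T : PCAStruct Y}

lemma pap_some_some (a b : Y) : pap T (Part.some a) (Part.some b) = T.app a b := by
  simp [pap]

lemma mem_pap {u v : Part Y} {c : Y} :
    c ∈ pap T u v ↔ ∃ a ∈ u, ∃ b ∈ v, c ∈ T.app a b := by
  simp [pap, Part.mem_bind_iff]

lemma mem_pap_intro {u v : Part Y} {a b c : Y}
    (ha : a ∈ u) (hb : b ∈ v) (hc : c ∈ T.app a b) : c ∈ pap T u v :=
  mem_pap.2 ⟨a, ha, b, hb, hc⟩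

lemma mem_pap_of_mem_some {u : Part Y} {cv w : Y} {v : Part Y}
    (h : w ∈ pap T u (Part.some cv)) (hc : cv ∈ v) : w ∈ pap T u v := by
  obtain ⟨a, ha, b, hb, hw⟩ := mem_pap.1 h
  obtain rfl : cv = b := Part.mem_unique (Part.mem_some cv) hb
  exact mem_pap_intro ha hc hw

section KS
variable {k s : Y}
  (hk : ∀ x y : Y, pap T (T.app k x) (Part.some y) = Part.some x)
  (hs1 : ∀ x y : Y, (pap T (T.app s x) (Part.some y)).Dom)
  (hs2 : ∀ x y z : Y, pap T (pap T (T.app s x) (Part.some y)) (Part.some z)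
        = pap T (T.app x z) (T.app y z))

include hk in
lemma kv_spec (x : Y) : ∃ v, T.app k x = Part.some v ∧ ∀ y, T.app v y = Part.some x := by
  have h := hk x x
  have hx : x ∈ pap T (T.app k x) (Part.some x) := by rw [h]; exact Part.mem_some x
  obtain ⟨a, ha, b, hb, hab⟩ := mem_pap.1 hx
  refine ⟨a, Part.eq_some_iff.2 ha, fun y => ?_⟩
  have h2 := hk x y
  rw [Part.eq_some_iff.2 ha, pap_some_some] at h2
  exact h2

include hs1 hs2 in
lemma sv_spec (x y : Y) : ∃ v, pap T (T.app s x) (Part.some y) = Part.some v ∧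
    ∀ z, T.app v z = pap T (T.app x z) (T.app y z) := by
  have hd := hs1 x y
  refine ⟨(pap T (T.app s x) (Part.some y)).get hd, (Part.get_eq_iff_mem hd).1 rfl |>
    (fun h => (Part.eq_some_iff.2 h)), fun z => ?_⟩
  have h2 := hs2 x y z
  rw [Part.eq_some_iff.2 ((Part.get_eq_iff_mem hd).1 rfl), pap_some_some] at h2
  exact h2

include hk hs1 hs2 in
lemma i_exists : ∃ i : Y, ∀ y, T.app i y = Part.some y := by
  obtain ⟨v, hv1, hv2⟩ := sv_spec hs1 hs2 k k
  refine ⟨v, fun y => ?_⟩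
  obtain ⟨w, hw1, hw2⟩ := kv_spec hk y
  rw [hv2, hw1, pap_some_some, hw2]

variable {i : Y} (hi : ∀ y : Y, T.app i y = Part.some y)

include hk hs1 hs2 hi in
lemma abs_spec (ρ : ℕ → Y) (n : ℕ) (M : Tm Y) :
    ∃ v, Tm.eval T ρ (Tm.abs k s i n M) = Part.some v ∧
      ∀ y, T.app v y = Tm.eval T (Function.update ρ n y) M := by
  induction M with
  | var m =>
    by_cases h : m = n
    · subst h
      refine ⟨i, by simp [Tm.abs, Tm.eval], fun y => ?_⟩
      rw [hi]; simp [Tm.eval, Function.update_self]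
    · obtain ⟨v, hv1, hv2⟩ := kv_spec hk (ρ m)
      refine ⟨v, by simp [Tm.abs, h, Tm.eval, pap_some_some, hv1], fun y => ?_⟩
      rw [hv2]; simp [Tm.eval, Function.update_of_ne h]
  | con c =>
    obtain ⟨v, hv1, hv2⟩ := kv_spec hk c
    exact ⟨v, by simp [Tm.abs, Tm.eval, pap_some_some, hv1], fun y => by
      rw [hv2]; simp [Tm.eval]⟩
  | app M N ihM ihN =>
    obtain ⟨vM, hM1, hM2⟩ := ihM
    obtain ⟨vN, hN1, hN2⟩ := ihN
    obtain ⟨v, hv1, hv2⟩ := sv_spec hs1 hs2 vM vN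
    refine ⟨v, ?_, fun y => ?_⟩
    · simp [Tm.abs, Tm.eval, hM1, hN1, pap_some_some, hv1]
    · rw [hv2, hM2, hN2]; rfl

include hk hs1 hs2 hi in
lemma Z_exists : ∃ Z : Y, ∀ g, ∃ z, T.app Z g = Part.some z ∧
    ∀ x, T.app z x = pap T (T.app g z) (Part.some x) := by
  set inner : Tm Y := .app (.app (.var 0) (.app (.var 1) (.var 1))) (.var 2) with hinner
  set Wt : Tm Y := Tm.abs k s i 1 (Tm.abs k s i 2 inner) with hWt
  obtain ⟨Z, hZ1, hZ2⟩ := abs_spec hk hs1 hs2 hi (fun _ => k) 0 (Tm.app Wt Wt)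
  refine ⟨Z, fun g => ?_⟩
  set ρg := Function.update (fun _ => k) 0 g with hρg
  obtain ⟨w, hw1, hw2⟩ := abs_spec hk hs1 hs2 hi ρg 1 (Tm.abs k s i 2 inner)
  set ρw := Function.update ρg 1 w with hρw
  obtain ⟨z, hz1, hz2⟩ := abs_spec hk hs1 hs2 hi ρw 2 inner
  have hww : T.app w w = Part.some z := by rw [hw2]; exact hz1
  refine ⟨z, ?_, fun x => ?_⟩
  · rw [hZ2]
    show pap T (Tm.eval T ρg Wt) (Tm.eval T ρg Wt) = _
    rw [hWt, hw1, pap_some_some, hww]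
  · rw [hz2]
    have e0 : Function.update ρw 2 x 0 = g := by
      rw [hρw, hρg]; simp
    have e1 : Function.update ρw 2 x 1 = w := by
      rw [hρw]; simp
    have e2 : Function.update ρw 2 x 2 = x := by simp
    rw [hinner]
    simp only [Tm.eval]
    rw [e0, e1, e2, pap_some_some, hww, pap_some_some]

end KS
end Infra

/-! ### Determinism of `phiA` and membership in `K₂` application -/

section PhiA

variable {mk : List A → A} {qp rp : A → A}

lemma phiA_unique_s10 (hqr : ∀ v c, qp v ≠ rp c) (hq : Function.Injective qp)
    (hr : Function.Injective rp) (hmk : Function.Injective mk)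
    {a : A} {α β : A → A} {c c' : A}
    (h : phiA mk qp rp a α β c) (h' : phiA mk qp rp a α β c') : c = c' := by
  obtain ⟨L, hL, hLr⟩ := h
  obtain ⟨L', hL', hLr'⟩ := h'
  have key : ∀ j, j ≤ L.length → j ≤ L'.length → L.take j = L'.take j := by
    intro j
    induction j with
    | zero => simp
    | succ j ih =>
      intro h1 h2
      have hj : j < L.length := h1
      have hj' : j < L'.length := h2
      have e := ih hj.le hj'.le
      obtain ⟨b, hb1, hb2⟩ := hL j hj
      obtain ⟨b', hb1', hb2'⟩ := hL' j hj'
      rw [e] at hb1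
      have hbb : b = b' := hq (hb1.symm.trans hb1')
      have hgg : L[j] = L'[j] := by rw [← hb2, ← hb2', hbb]
      rw [List.take_succ, List.take_succ, e, List.getElem?_eq_getElem hj,
        List.getElem?_eq_getElem hj', hgg]
  have hlen : L.length = L'.length := by
    rcases lt_trichotomy L.length L'.length with h | h | h
    · obtain ⟨b, hb1, _⟩ := hL' L.length h
      rw [← key L.length le_rfl h.le, List.take_length] at hb1
      exact absurd (hLr ▸ hb1) (fun hh => hqr b c hh.symm)
    · exact h
    · obtain ⟨b, hb1, _⟩ := hL L'.length h
      rw [key L'.length h.le le_rfl, List.take_length] at hb1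
      exact absurd (hLr' ▸ hb1) (fun hh => hqr b c' hh.symm)
  have hLL : L = L' := by
    have := key L.length le_rfl hlen.le
    rwa [List.take_length, hlen, List.take_length] at this
  subst hLL
  exact hr (hLr.symm.trans hLr')

lemma mem_K2app {α β ζ : A → A}
    (hu : ∀ (a : A) c c', phiA mk qp rp a α β c → phiA mk qp rp a α β c' → c = c')
    (h : ∀ a, phiA mk qp rp a α β (ζ a)) :
    ζ ∈ (K2 mk qp rp).app α β := by
  have hD : ∀ a, ∃ c, phiA mk qp rp a α β c := fun a => ⟨ζ a, h a⟩
  refine ⟨hD, funext fun a => ?_⟩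
  exact hu a _ _ (hD a).choose_spec (h a)

lemma of_mem_K2app {α β ζ : A → A} (h : ζ ∈ (K2 mk qp rp).app α β) :
    ∀ a, phiA mk qp rp a α β (ζ a) := by
  obtain ⟨hD, hg⟩ := h
  subst hg
  exact fun a => (hD a).choose_spec

end PhiA

section RealizerTerms

variable {Y : Type v}

/-- The condition of the interrogation loop. -/
def condT (d rδ eP0 : Y) : Tm Y :=
  .app (.con d) (.app (.app (.con rδ) (.con eP0)) (.app (.var 0) (.var 3)))

/-- The "result" branch of the loop. -/
def MthenT (rδ eP1 : Y) : Tm Y :=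
  .app (.app (.con rδ) (.con eP1)) (.app (.var 0) (.var 4))

/-- The "query" branch of the loop. -/
def NelseT (rδ eP1 eSNOC : Y) : Tm Y :=
  .app (.var 2) (.app (.app (.con rδ) (.app (.app (.con rδ) (.con eSNOC)) (.var 4)))
    (.app (.var 1) (.app (.app (.con rδ) (.con eP1)) (.app (.var 0) (.var 4)))))

/-- The body of the loop. -/
def bodyT (k s i C d rδ eP0 eP1 eSNOC : Y) : Tm Y :=
  .app (.app (.app (.app (.con C) (condT d rδ eP0)) (Tm.abs k s i 4 (MthenT rδ eP1)))
    (Tm.abs k s i 4 (NelseT rδ eP1 eSNOC))) (.var 3)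

/-- Initialization: the δ-image of `tup [a]`. -/
def initT (rδ eCONS enil : Y) : Tm Y :=
  .app (.app (.con rδ) (.app (.app (.con rδ) (.con eCONS)) (.var 4))) (.con enil)

variable {T : PCAStruct Y}

lemma mem_pap_mono {u v u' v' : Part Y} {w : Y} (h : w ∈ pap T u v)
    (hu : ∀ x ∈ u, x ∈ u') (hv : ∀ x ∈ v, x ∈ v') : w ∈ pap T u' v' := by
  obtain ⟨a, ha, c, hc, hw⟩ := mem_pap.1 h
  exact mem_pap_intro (hu a ha) (hv c hc) hw

end RealizerTerms

/-- Let `K₂(A)` be based on the pca `A` (its coding is `A`'s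
standard tuple coding, queries are `p⊥v` and results `p⊤c`). For any decidable
applicative morphism `δ : A → B` w.r.t. which every total function `A → A` is
representable, `ε(α) = {b | b represents α w.r.t. δ}` is the greatest decidable
applicative morphism `K₂(A) → B` with `ε ∘ γ ≅ δ`. -/
theorem statement10 {A B : Type u} (P : StdPCA A)
    (T : PCAStruct B) (hT : IsPCA T) (tB fB : B) (hbB : IsBooleans T tB fB)
    (δ : A → Set B) (hδ : IsAppMor P.S T δ)
    (hdec : IsDecidableMor T δ P.t P.f tB fB)
    (hrep : ∀ g : A → A, ∃ rg, RepresentsPFun T δ (fun a => some (g a)) rg) :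
    let K := K2 P.tup (fun v => P.pairF P.f v) (fun c => P.pairF P.t c)
    let γ : A → Set (A → A) := fun a => {Function.const A a}
    let ε : (A → A) → Set B := fun α => {b | RepresentsPFun T δ (fun x => some (α x)) b}
    IsAppMor K T ε ∧
    IsDecidableMor T ε (Function.const A P.t) (Function.const A P.f) tB fB ∧
    morEquiv T (morComp γ ε) δ ∧
    ∀ ε' : (A → A) → Set B, IsAppMor K T ε' →
      IsDecidableMor T ε' (Function.const A P.t) (Function.const A P.f) tB fB →
      morEquiv T (morComp γ ε') δ → morLE T ε' ε := by
  intro K γ ε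
  classical
  obtain ⟨k, s, hk, hs1, hs2⟩ := hT
  obtain ⟨i, hi⟩ := i_exists hk hs1 hs2
  obtain ⟨Zc, hZc⟩ := Z_exists hk hs1 hs2 hi
  obtain ⟨hδne, rδ, hrδ⟩ := hδ
  obtain ⟨d, hdt, hdf⟩ := hdec
  obtain ⟨htfB, C, hC⟩ := hbB
  obtain ⟨eP0, heP0⟩ := hδne P.P0
  obtain ⟨eP1, heP1⟩ := hδne P.P1
  obtain ⟨eSNOC, heSNOC⟩ := hδne P.SNOC
  obtain ⟨eCONS, heCONS⟩ := hδne P.CONS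
  obtain ⟨enil, henil⟩ := hδne (P.tup [])
  -- A-side facts
  have pair_inj : ∀ {x y x' y' : A}, P.pairF x y = P.pairF x' y' → x = x' ∧ y = y' := by
    intro x y x' y' h
    constructor
    · have h0 := P.P0_spec x y
      rw [h, P.P0_spec] at h0
      exact (Part.some_inj.1 h0).symm
    · have h1 := P.P1_spec x y
      rw [h, P.P1_spec] at h1
      exact (Part.some_inj.1 h1).symm
  have hqr : ∀ v c : A, P.pairF P.f v ≠ P.pairF P.t c :=
    fun v c h => P.t_ne_f ((pair_inj h).1.symm)
  have hqinj : Function.Injective (fun v : A => P.pairF P.f v) :=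
    fun a b h => (pair_inj h).2
  have hrinj : Function.Injective (fun c : A => P.pairF P.t c) :=
    fun a b h => (pair_inj h).2
  have huniq : ∀ (α β : A → A) (a : A) (c c' : A),
      phiA P.tup (fun v => P.pairF P.f v) (fun c => P.pairF P.t c) a α β c →
      phiA P.tup (fun v => P.pairF P.f v) (fun c => P.pairF P.t c) a α β c' → c = c' :=
    fun α β a c c' h h' => phiA_unique_s10 hqr hqinj hrinj P.tup_inj h h'
  -- Part 1 : ε is an applicative morphism
  have part1 : IsAppMor K T ε := by
    constructor
    · intro α
      obtain ⟨rg, hrg⟩ := hrep α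
      exact ⟨rg, hrg⟩
    · -- the realizer
      obtain ⟨r, hr1, hr2⟩ := abs_spec hk hs1 hs2 hi (fun _ => k) 0
        (Tm.abs k s i 1 (Tm.abs k s i 4
          (.app (.app (.con Zc) (Tm.abs k s i 2 (Tm.abs k s i 3 (bodyT k s i C d rδ eP0 eP1 eSNOC)))) (initT rδ eCONS enil))))
      refine ⟨r, fun α α' ζ hζ b hb b' hb' => ?_⟩
      have hphi := of_mem_K2app hζ
      obtain ⟨r1, hr11, hr12⟩ := abs_spec hk hs1 hs2 hi
        (Function.update (fun _ => k) 0 b) 1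
        (Tm.abs k s i 4
          (.app (.app (.con Zc) (Tm.abs k s i 2 (Tm.abs k s i 3 (bodyT k s i C d rδ eP0 eP1 eSNOC)))) (initT rδ eCONS enil)))
      obtain ⟨w, hw1, hw2⟩ := abs_spec hk hs1 hs2 hi
        (Function.update (Function.update (fun _ => k) 0 b) 1 b') 4
        (.app (.app (.con Zc) (Tm.abs k s i 2 (Tm.abs k s i 3 (bodyT k s i C d rδ eP0 eP1 eSNOC)))) (initT rδ eCONS enil))
      have hrw : pap T (T.app r b) (Part.some b') = Part.some w := by
        rw [hr2, hr11, pap_some_some, hr12, hw1]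
      refine ⟨w, by rw [hrw]; exact Part.mem_some w, ?_⟩
      -- w represents ζ
      intro a x hax u hu
      obtain rfl : ζ a = x := Option.some_inj.1 hax
      -- the fixed point z for this u
      obtain ⟨gv, hgv1, hgv2⟩ := abs_spec hk hs1 hs2 hi
        (Function.update (Function.update (Function.update (fun _ => k) 0 b) 1 b') 4 u) 2
        (Tm.abs k s i 3 (bodyT k s i C d rδ eP0 eP1 eSNOC))
      obtain ⟨z, hz1, hz2⟩ := hZc gv
      obtain ⟨g2, hg21, hg22⟩ := abs_spec hk hs1 hs2 hi
        (Function.update (Function.update (Function.update (Function.update (fun _ => k) 0 b) 1 b') 4 u) 2 z) 3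
        (bodyT k s i C d rδ eP0 eP1 eSNOC)
      have hzeval : ∀ l : B, T.app z l = Tm.eval T
          (Function.update (Function.update (Function.update (Function.update (Function.update (fun _ => k) 0 b) 1 b') 4 u) 2 z) 3 l)
          (bodyT k s i C d rδ eP0 eP1 eSNOC) := by
        intro l
        rw [hz2, hgv2, hg21, pap_some_some, hg22]
      -- cooked evaluation of the loop body
      have cooked : ∀ l : B, ∃ vM vN : B,
          T.app z l = pap T (pap T (pap T (pap T (Part.some C)
              (pap T (Part.some d) (pap T (T.app rδ eP0) (T.app b l))))
            (Part.some vM)) (Part.some vN)) (Part.some l) ∧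
          (∀ y, T.app vM y = pap T (T.app rδ eP1) (T.app b y)) ∧
          (∀ y, T.app vN y = pap T (Part.some z)
            (pap T (pap T (Part.some rδ) (pap T (T.app rδ eSNOC) (Part.some y)))
              (pap T (Part.some b') (pap T (T.app rδ eP1) (T.app b y))))) := by
        intro l
        obtain ⟨vM, hvM1, hvM2⟩ := abs_spec hk hs1 hs2 hi
          (Function.update (Function.update (Function.update (Function.update (Function.update (fun _ => k) 0 b) 1 b') 4 u) 2 z) 3 l)
          4 (MthenT rδ eP1)
        obtain ⟨vN, hvN1, hvN2⟩ := abs_spec hk hs1 hs2 hi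
          (Function.update (Function.update (Function.update (Function.update (Function.update (fun _ => k) 0 b) 1 b') 4 u) 2 z) 3 l)
          4 (NelseT rδ eP1 eSNOC)
        refine ⟨vM, vN, ?_, ?_, ?_⟩
        · rw [hzeval l]
          simp only [bodyT, condT, Tm.eval_app, Tm.eval_var, Tm.eval_con]
          rw [hvM1, hvN1]
          simp [Function.update_apply, pap_some_some]
        · intro y
          rw [hvM2]
          simp only [MthenT, Tm.eval_app, Tm.eval_var, Tm.eval_con]
          simp [Function.update_apply, pap_some_some]
        · intro y
          rw [hvN2]
          simp only [NelseT, Tm.eval_app, Tm.eval_var, Tm.eval_con]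
          simp [Function.update_apply, pap_some_some]
      -- the path of α' through α at a
      obtain ⟨L, hL, hLr⟩ := hphi a
      have main : ∀ n j, j + n = L.length →
          ∀ l : B, l ∈ δ (P.tup (a :: L.take j)) →
          ∃ v, v ∈ T.app z l ∧ v ∈ δ (ζ a) := by
        intro n
        induction n with
        | zero =>
          intro j hj l hl
          have hTL : L.take j = L := by
            have : j = L.length := by omega
            rw [this, List.take_length]
          obtain ⟨u₁, hu₁p, hu₁⟩ := hb _ _ rfl l hl
          rw [hTL, hLr] at hu₁
          have hbl : T.app b l = Part.some u₁ := Part.eq_some_iff.2 hu₁p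
          have h0 : P.t ∈ P.S.app P.P0 (P.pairF P.t (ζ a)) := by
            rw [P.P0_spec]; exact Part.mem_some _
          obtain ⟨u₂, hu₂p, hu₂⟩ := hrδ P.P0 _ _ h0 eP0 heP0 u₁ hu₁
          have h1 : ζ a ∈ P.S.app P.P1 (P.pairF P.t (ζ a)) := by
            rw [P.P1_spec]; exact Part.mem_some _
          obtain ⟨v, hvp, hv⟩ := hrδ P.P1 _ _ h1 eP1 heP1 u₁ hu₁
          obtain ⟨vM, vN, hcook, hMy, _⟩ := cooked l
          refine ⟨v, ?_, hv⟩
          rw [hcook, hbl, Part.eq_some_iff.2 hu₂p, pap_some_some, hdt u₂ hu₂,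
            pap_some_some, (hC vM vN).1, pap_some_some, hMy l, hbl]
          exact hvp
        | succ n ih =>
          intro j hj l hl
          have hjlt : j < L.length := by omega
          obtain ⟨bj, hbj1, hbj2⟩ := hL j hjlt
          obtain ⟨u₁, hu₁p, hu₁⟩ := hb _ _ rfl l hl
          rw [hbj1] at hu₁
          have hbl : T.app b l = Part.some u₁ := Part.eq_some_iff.2 hu₁p
          have h0 : P.f ∈ P.S.app P.P0 (P.pairF P.f bj) := by
            rw [P.P0_spec]; exact Part.mem_some _
          obtain ⟨u₂, hu₂p, hu₂⟩ := hrδ P.P0 _ _ h0 eP0 heP0 u₁ hu₁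
          have h1 : bj ∈ P.S.app P.P1 (P.pairF P.f bj) := by
            rw [P.P1_spec]; exact Part.mem_some _
          obtain ⟨v1, hv1p, hv1⟩ := hrδ P.P1 _ _ h1 eP1 heP1 u₁ hu₁
          obtain ⟨ans, hansp, hans⟩ := hb' bj _ rfl v1 hv1
          rw [hbj2] at hans
          -- the SNOC step in A
          have hsn := P.SNOC_spec (a :: L.take j) (L[j])
          have hsnm : P.tup ((a :: L.take j) ++ [L[j]]) ∈
              pap P.S (P.S.app P.SNOC (P.tup (a :: L.take j))) (Part.some (L[j])) := by
            rw [hsn]; exact Part.mem_some _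
          obtain ⟨sv, hsv1, q, hq, hsvm⟩ := mem_pap.1 hsnm
          obtain rfl : L[j] = q := Part.mem_unique (Part.mem_some _) hq
          have htake : (a :: L.take j) ++ [L[j]] = a :: L.take (j + 1) := by
            rw [List.cons_append, List.take_succ, List.getElem?_eq_getElem hjlt]
            rfl
          rw [htake] at hsvm
          obtain ⟨sn1, hsn1p, hsn1⟩ := hrδ P.SNOC _ sv hsv1 eSNOC heSNOC l hl
          obtain ⟨l', hl'p, hl'⟩ := hrδ sv (L[j]) _ hsvm sn1 hsn1 ans hans
          obtain ⟨v, hvz, hv⟩ := ih (j + 1) (by omega) l' hl'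
          obtain ⟨vM, vN, hcook, _, hNy⟩ := cooked l
          refine ⟨v, ?_, hv⟩
          rw [hcook, hbl, Part.eq_some_iff.2 hu₂p, pap_some_some, hdf u₂ hu₂,
            pap_some_some, (hC vM vN).2, pap_some_some, hNy l, hbl]
          have hansmem : ans ∈ pap T (Part.some b')
              (pap T (T.app rδ eP1) (Part.some u₁)) :=
            mem_pap_intro (Part.mem_some b') hv1p hansp
          have hl'mem : l' ∈ pap T (pap T (Part.some rδ)
              (pap T (T.app rδ eSNOC) (Part.some l)))
              (pap T (Part.some b') (pap T (T.app rδ eP1) (Part.some u₁))) := by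
            refine mem_pap_mono hl'p ?_ ?_
            · intro m hm
              exact mem_pap_intro (Part.mem_some rδ) hsn1p hm
            · intro m hm
              obtain rfl : ans = m := Part.mem_unique (Part.mem_some _) hm
              exact hansmem
          exact mem_pap_intro (Part.mem_some z) hl'mem hvz
      -- initialization
      have hc0 : P.tup [a] ∈ pap P.S (P.S.app P.CONS a) (Part.some (P.tup [])) := by
        rw [P.CONS_spec a []]; exact Part.mem_some _
      obtain ⟨cv, hcv1, q, hq, hcvm⟩ := mem_pap.1 hc0
      obtain rfl : P.tup [] = q := Part.mem_unique (Part.mem_some _) hq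
      obtain ⟨w₁, hw₁p, hw₁⟩ := hrδ P.CONS a cv hcv1 eCONS heCONS u hu
      obtain ⟨l₀, hl₀p, hl₀⟩ := hrδ cv _ _ hcvm w₁ hw₁ enil henil
      have hl₀' : l₀ ∈ δ (P.tup (a :: L.take 0)) := by
        simpa using hl₀
      obtain ⟨v, hvz, hv⟩ := main L.length 0 (by omega) l₀ hl₀'
      refine ⟨v, ?_, hv⟩
      rw [hw2 u]
      simp only [initT, Tm.eval_app, Tm.eval_var, Tm.eval_con]
      have hEg : Tm.eval T
          (Function.update (Function.update (Function.update (fun _ => k) 0 b) 1 b') 4 u)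
          (Tm.abs k s i 2 (Tm.abs k s i 3 (bodyT k s i C d rδ eP0 eP1 eSNOC))) = Part.some gv := hgv1
      rw [hEg, pap_some_some, hz1]
      have hl₀mem : l₀ ∈ pap T (pap T (Part.some rδ)
          (pap T (pap T (Part.some rδ) (Part.some eCONS))
            (Part.some (Function.update (Function.update (Function.update (fun _ => k) 0 b) 1 b') 4 u 4))))
          (Part.some enil) := by
        refine mem_pap_mono hl₀p ?_ (fun x hx => hx)
        intro m hm
        refine mem_pap_intro (Part.mem_some rδ) ?_ hm
        rw [pap_some_some]
        have : Function.update (Function.update (Function.update (fun _ => k) 0 b) 1 b') 4 u 4 = u := by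
          simp
        rw [this]
        exact hw₁p
      exact mem_pap_intro (Part.mem_some z) hl₀mem hvz
  -- membership in the composite `γ` then `E`
  have hmc : ∀ (E : (A → A) → Set B) (x : A) (bb : B),
      bb ∈ morComp γ E x ↔ bb ∈ E (Function.const A x) := by
    intro E x bb
    constructor
    · rintro h
      simp only [morComp, Set.mem_iUnion] at h
      obtain ⟨y, hy, hby⟩ := h
      have : y = Function.const A x := Set.eq_of_mem_singleton hy
      rwa [this] at hby
    · intro h
      simp only [morComp, Set.mem_iUnion]
      exact ⟨Function.const A x, rfl, h⟩
  obtain ⟨u₀, hu₀⟩ := hδne P.t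
  -- Part 2 : ε is decidable
  have part2 : IsDecidableMor T ε (Function.const A P.t) (Function.const A P.f) tB fB := by
    obtain ⟨dε, hd1, hd2⟩ := abs_spec hk hs1 hs2 hi (fun _ => k) 0
      (.app (.con d) (.app (.var 0) (.con u₀)))
    have key : ∀ (c₀ : A) (b : B), b ∈ ε (Function.const A c₀) →
        ∃ v, T.app dε b = T.app d v ∧ v ∈ δ c₀ := by
      intro c₀ b hbb
      obtain ⟨v, hvp, hv⟩ := hbb P.t c₀ rfl u₀ hu₀
      refine ⟨v, ?_, hv⟩
      rw [hd2]
      simp only [Tm.eval_app, Tm.eval_var, Tm.eval_con]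
      have e0 : Function.update (fun _ => k) 0 b 0 = b := by simp
      rw [e0, pap_some_some, Part.eq_some_iff.2 hvp, pap_some_some]
    refine ⟨dε, fun b hbb => ?_, fun b hbb => ?_⟩
    · obtain ⟨v, h1, h2⟩ := key P.t b hbb
      rw [h1]; exact hdt v h2
    · obtain ⟨v, h1, h2⟩ := key P.f b hbb
      rw [h1]; exact hdf v h2
  -- Part 3 : ε ∘ γ ≅ δ
  have part3 : morEquiv T (morComp γ ε) δ := by
    constructor
    · obtain ⟨s₁v, hs₁1, hs₁2⟩ := abs_spec hk hs1 hs2 hi (fun _ => k) 0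
        (.app (.var 0) (.con u₀))
      refine ⟨s₁v, fun x bb hbb => ?_⟩
      have hb' := (hmc ε x bb).1 hbb
      obtain ⟨v, hvp, hv⟩ := hb' P.t x rfl u₀ hu₀
      refine ⟨v, ?_, hv⟩
      rw [hs₁2]
      simp only [Tm.eval_app, Tm.eval_var, Tm.eval_con]
      have e0 : Function.update (fun _ => k) 0 bb 0 = bb := by simp
      rw [e0, pap_some_some]
      exact hvp
    · obtain ⟨s₂v, hs₂1, hs₂2⟩ := abs_spec hk hs1 hs2 hi (fun _ => k) 0
        (Tm.abs k s i 1 (.var 0))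
      refine ⟨s₂v, fun x c hc => ?_⟩
      obtain ⟨cv, hcv1, hcv2⟩ := abs_spec hk hs1 hs2 hi
        (Function.update (fun _ => k) 0 c) 1 (.var 0)
      refine ⟨cv, by rw [hs₂2, hcv1]; exact Part.mem_some cv, ?_⟩
      refine (hmc ε x cv).2 ?_
      intro a y hay u hu
      obtain rfl : x = y := Option.some_inj.1 hay
      refine ⟨c, ?_, hc⟩
      rw [hcv2 u]
      simp only [Tm.eval_var]
      have e0 : Function.update (Function.update (fun _ => k) 0 c) 1 u 0 = c := by simp
      rw [e0]
      exact Part.mem_some c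
  -- Part 4 : ε is greatest
  have part4 : ∀ ε' : (A → A) → Set B, IsAppMor K T ε' →
      IsDecidableMor T ε' (Function.const A P.t) (Function.const A P.f) tB fB →
      morEquiv T (morComp γ ε') δ → morLE T ε' ε := by
    intro ε' hA' _hdec' heq'
    obtain ⟨hne', r', hr'⟩ := hA'
    obtain ⟨⟨s₁, hs₁⟩, s₂, hs₂⟩ := heq'
    -- the constant machine ζf₀ on non-pair prefixes
    set ζf0 : A → A := fun a' =>
      if ∃ bb : A, a' = P.tup [bb] then P.pairF P.f P.t else P.pairF P.t P.t with hζf0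
    -- `ζf α` is the machine interrogating its oracle `β` once at the point
    -- recorded in its prefix, returning the `α`-value of the answer
    set ζf : (A → A) → A → A := fun α a' =>
      if h : ∃ p : A × A, a' = P.tup [p.1, p.2] then P.pairF P.t (α h.choose.2)
      else ζf0 a' with hζf
    -- the uniform machine `Df` with `Df · α = ζf α`
    set Df : A → A := fun w =>
      if h : ∃ p : (A × A) × List A, w = P.tup (P.tup [p.1.1, p.1.2] :: p.2) then
        (if h.choose.2 = [] then P.pairF P.f h.choose.1.2
         else if h2 : ∃ v, h.choose.2 = [v] then P.pairF P.t (P.pairF P.t h2.choose)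
         else P.pairF P.t P.t)
      else if h' : ∃ p : A × List A, w = P.tup (p.1 :: p.2) then P.pairF P.t (ζf0 h'.choose.1)
      else P.t with hDf
    have tcons : ∀ {c c' : A} {L L' : List A},
        P.tup (c :: L) = P.tup (c' :: L') → c = c' ∧ L = L' := by
      intro c c' L L' h
      have := P.tup_inj h
      exact List.cons_eq_cons.mp this
    have tpair : ∀ {a x a' x' : A}, P.tup [a, x] = P.tup [a', x'] → a = a' ∧ x = x' := by
      intro a x a' x' h
      have := P.tup_inj h
      simp only [List.cons_eq_cons] at this
      exact ⟨this.1, this.2.1⟩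
    have hDf1 : ∀ (a x : A) (L : List A), Df (P.tup (P.tup [a, x] :: L)) =
        (if L = [] then P.pairF P.f x
         else if h2 : ∃ v, L = [v] then P.pairF P.t (P.pairF P.t h2.choose)
         else P.pairF P.t P.t) := by
      intro a x L
      have hcond : ∃ p : (A × A) × List A,
          P.tup (P.tup [a, x] :: L) = P.tup (P.tup [p.1.1, p.1.2] :: p.2) := ⟨((a, x), L), rfl⟩
      rw [hDf]
      simp only []
      rw [dif_pos hcond]
      obtain ⟨h1, h2⟩ := tcons hcond.choose_spec
      obtain ⟨_, e2⟩ := tpair h1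
      rw [← e2, ← h2]
    have hDf2 : ∀ (a' : A) (L : List A), (¬ ∃ p : A × A, a' = P.tup [p.1, p.2]) →
        Df (P.tup (a' :: L)) = P.pairF P.t (ζf0 a') := by
      intro a' L hnp
      have hcond : ¬ ∃ p : (A × A) × List A,
          P.tup (a' :: L) = P.tup (P.tup [p.1.1, p.1.2] :: p.2) := by
        rintro ⟨p, hp⟩
        exact hnp ⟨p.1, (tcons hp).1⟩
      have hcond' : ∃ p : A × List A, P.tup (a' :: L) = P.tup (p.1 :: p.2) := ⟨(a', L), rfl⟩
      rw [hDf]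
      simp only []
      rw [dif_neg hcond, dif_pos hcond']
      rw [← (tcons hcond'.choose_spec).1]
    have hnotpair1 : ∀ a : A, ¬ ∃ p : A × A, P.tup [a] = P.tup [p.1, p.2] := by
      rintro a ⟨p, hp⟩
      have := P.tup_inj hp
      simp at this
    -- `Df · α = ζf α`
    have claim1 : ∀ (α : A → A) (a' : A),
        phiA P.tup (fun v => P.pairF P.f v) (fun c => P.pairF P.t c) a' Df α (ζf α a') := by
      intro α a'
      by_cases hp : ∃ p : A × A, a' = P.tup [p.1, p.2]
      · have hsp := hp.choose_spec
        set x := hp.choose.2 with hx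
        have hζ : ζf α a' = P.pairF P.t (α x) := by rw [hζf]; simp only []; rw [dif_pos hp]
        refine ⟨[α x], ?_, ?_⟩
        · intro j hj
          obtain rfl : j = 0 := by simpa using hj
          refine ⟨x, ?_, ?_⟩
          · show Df (P.tup (a' :: [])) = P.pairF P.f x
            rw [hsp, hDf1]
            simp
          · simp
        · show Df (P.tup (a' :: [α x])) = P.pairF P.t (ζf α a')
          rw [hζ, hsp, hDf1]
          have h2 : ∃ v : A, [α x] = [v] := ⟨α x, rfl⟩
          rw [if_neg (by simp), dif_pos h2]
          obtain ⟨e, -⟩ := List.cons_eq_cons.mp h2.choose_spec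
          rw [← e]
      · have hζ : ζf α a' = ζf0 a' := by rw [hζf]; simp only []; rw [dif_neg hp]
        refine ⟨[], fun j hj => absurd hj (by simp), ?_⟩
        show Df (P.tup (a' :: [])) = P.pairF P.t (ζf α a')
        rw [hζ, hDf2 a' [] hp]
    -- `(ζf α) · (const x) = const (α x)`
    have claim2 : ∀ (α : A → A) (x a : A),
        phiA P.tup (fun v => P.pairF P.f v) (fun c => P.pairF P.t c) a (ζf α)
          (Function.const A x) (α x) := by
      intro α x a
      refine ⟨[x], ?_, ?_⟩
      · intro j hj
        obtain rfl : j = 0 := by simpa using hj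
        refine ⟨P.t, ?_, ?_⟩
        · show ζf α (P.tup (a :: [])) = P.pairF P.f P.t
          rw [hζf]
          simp only []
          rw [dif_neg (hnotpair1 a), hζf0]
          simp only []
          rw [if_pos ⟨a, rfl⟩]
        · simp [Function.const]
      · show ζf α (P.tup (a :: [x])) = P.pairF P.t (α x)
        have hp : ∃ p : A × A, P.tup (a :: [x]) = P.tup [p.1, p.2] := ⟨(a, x), rfl⟩
        rw [hζf]
        simp only []
        rw [dif_pos hp]
        have := tpair hp.choose_spec.symm
        rw [this.2]
    have hDmem : ∀ α : A → A, (ζf α) ∈ K.app Df α :=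
      fun α => mem_K2app (huniq Df α) (claim1 α)
    have hζmem : ∀ (α : A → A) (x : A),
        (Function.const A (α x)) ∈ K.app (ζf α) (Function.const A x) :=
      fun α x => mem_K2app (huniq _ _) (fun a => claim2 α x a)
    obtain ⟨dD, hdD⟩ := hne' Df
    obtain ⟨sε, hsε1, hsε2⟩ := abs_spec hk hs1 hs2 hi (fun _ => k) 0
      (Tm.abs k s i 1 (.app (.con s₁) (.app (.app (.con r')
        (.app (.app (.con r') (.con dD)) (.var 0))) (.app (.con s₂) (.var 1)))))
    refine ⟨sε, fun α bb hbb => ?_⟩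
    obtain ⟨sb, hsb1, hsb2⟩ := abs_spec hk hs1 hs2 hi
      (Function.update (fun _ => k) 0 bb) 1
      (.app (.con s₁) (.app (.app (.con r')
        (.app (.app (.con r') (.con dD)) (.var 0))) (.app (.con s₂) (.var 1))))
    refine ⟨sb, by rw [hsε2, hsb1]; exact Part.mem_some sb, ?_⟩
    intro a x hax u hu
    obtain rfl : α a = x := Option.some_inj.1 hax
    obtain ⟨w₁, hw₁p, hw₁⟩ := hr' Df α (ζf α) (hDmem α) dD hdD bb hbb
    obtain ⟨w₂, hw₂p, hw₂mem⟩ := hs₂ a u hu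
    have hw₂ := (hmc ε' a w₂).1 hw₂mem
    obtain ⟨w₃, hw₃p, hw₃⟩ := hr' (ζf α) (Function.const A a) (Function.const A (α a))
      (hζmem α a) w₁ hw₁ w₂ hw₂
    obtain ⟨c, hcp, hc⟩ := hs₁ (α a) w₃ ((hmc ε' (α a) w₃).2 hw₃)
    refine ⟨c, ?_, hc⟩
    rw [hsb2 u]
    simp only [Tm.eval_app, Tm.eval_var, Tm.eval_con]
    have e0 : Function.update (Function.update (fun _ => k) 0 bb) 1 u 0 = bb := by simp
    have e1 : Function.update (Function.update (fun _ => k) 0 bb) 1 u 1 = u := by simp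
    rw [e0, e1, pap_some_some, pap_some_some]
    have hw₃full : w₃ ∈ pap T (pap T (Part.some r') (pap T (T.app r' dD) (Part.some bb)))
        (T.app s₂ u) := by
      refine mem_pap_mono hw₃p ?_ ?_
      · intro m hm
        exact mem_pap_intro (Part.mem_some r') hw₁p hm
      · intro m hm
        obtain rfl : w₂ = m := Part.mem_unique (Part.mem_some _) hm
        exact hw₂p
    exact mem_pap_intro (Part.mem_some s₁) hw₃full hcp
  exact ⟨part1, part2, part3, part4⟩

end OostenK2
end
end
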